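/- arXiv:2511.21836 — 4 statements merged into one kernel-verified Lean document; each statement's English description precedes it below -/
import Mathlib

section
/- Exposure probability restriction under sharp no waning of the placebo. Assume, for a = 0, the hypotheses of the second-interval incidence decomposition (Consistency, Exposure necessity, Exclusion restriction, Treatment exchangeability, Positivity, Exposure exchangeability, Extended exposure exchangeability, 0 < P(E1[0]=1) < 1, P(E1[0]=1, Y1[0,1]=0) > 0), together with sharp no waning of the placebo (Y1[0,1] = Y2[0,1] a.s.), E[Y1[0,1]] > 0 and E[ΔY2 | A=0] > 0. Write p1 := P(E1[0]=1) and q0 := P(E2[0,0]=1 | E1[0]=0). Then E[ΔY1 | A=0] / E[ΔY2 | A=0] = p1 / (q0 · (1 − p1)). -/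
open MeasureTheory ProbabilityTheory
open scoped ProbabilityTheory

lemma bin_integral {Ω : Type*} [MeasurableSpace Ω] (μ : Measure Ω) [IsFiniteMeasure μ]
    {X : Ω → ℝ} (hm : Measurable X) (hr : ∀ ω, X ω = 0 ∨ X ω = 1) :
    Integrable X μ ∧ ∫ ω, X ω ∂μ = (μ {ω | X ω = 1}).toReal := by
  have hs : MeasurableSet {ω | X ω = 1} := hm (measurableSet_singleton 1)
  have hXeq : X = Set.indicator {ω | X ω = 1} (fun _ => (1:ℝ)) := by
    funext ω
    rcases hr ω with h | h
    · simp [Set.indicator_apply, h]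
    · simp [Set.indicator_apply, h]
  constructor
  · rw [hXeq]; exact (integrable_const (1:ℝ)).indicator hs
  · conv_lhs => rw [hXeq]
    rw [integral_indicator hs]
    simp [Measure.real]

lemma cond_integral_eq {Ω : Type*} [MeasurableSpace Ω] (μ : Measure Ω) (s : Set Ω) (f : Ω → ℝ) :
    ∫ ω, f ω ∂(μ[|s]) = ((μ s)⁻¹).toReal * ∫ ω in s, f ω ∂μ := by
  rw [ProbabilityTheory.cond, integral_smul_measure, smul_eq_mul]

lemma indep_setIntegral {Ω : Type*} [MeasurableSpace Ω] (μ : Measure Ω) [IsProbabilityMeasure μ]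
    {Z F : Ω → ℝ} (hZm : Measurable Z) (hFm : Measurable F)
    (hZr : ∀ ω, Z ω = 0 ∨ Z ω = 1)
    (hind : IndepFun Z F μ) :
    ∫ ω in {ω | Z ω = 1}, F ω ∂μ = (μ {ω | Z ω = 1}).toReal * ∫ ω, F ω ∂μ := by
  have hs : MeasurableSet {ω | Z ω = 1} := hZm (measurableSet_singleton 1)
  have hid : Set.indicator {ω | Z ω = 1} F = Z * F := by
    funext ω
    rcases hZr ω with h | h
    · simp [Set.indicator_apply, h]
    · simp [Set.indicator_apply, h]
  rw [← integral_indicator hs, hid,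
    hind.integral_mul_eq_mul_integral hZm.aestronglyMeasurable hFm.aestronglyMeasurable,
    (bin_integral μ hZm hZr).2]

/-- Exposure probability restriction under sharp no waning of the placebo. -/
theorem exposure_probability_restriction
    {Ω : Type*} [MeasurableSpace Ω] (μ : Measure Ω) [IsProbabilityMeasure μ]
    (A E1 E2 DY1 DY2 : Ω → ℝ)
    (E1p : ℝ → Ω → ℝ) (E2p Y1p Y2p Wp : ℝ → ℝ → Ω → ℝ)
    (hAm : Measurable A) (hE1m : Measurable E1) (hE2m : Measurable E2)
    (hDY1m : Measurable DY1) (hDY2m : Measurable DY2)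
    (hE1pm : ∀ a ∈ ({0, 1} : Set ℝ), Measurable (E1p a))
    (hE2pm : ∀ a ∈ ({0, 1} : Set ℝ), ∀ e1 ∈ ({0, 1} : Set ℝ), Measurable (E2p a e1))
    (hY1pm : ∀ a ∈ ({0, 1} : Set ℝ), ∀ e1 ∈ ({0, 1} : Set ℝ), Measurable (Y1p a e1))
    (hY2pm : ∀ a ∈ ({0, 1} : Set ℝ), ∀ e2 ∈ ({0, 1} : Set ℝ), Measurable (Y2p a e2))
    (hWpm : ∀ a ∈ ({0, 1} : Set ℝ), ∀ e1 ∈ ({0, 1} : Set ℝ), Measurable (Wp a e1))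
    (hAr : ∀ ω, A ω = 0 ∨ A ω = 1) (hE1r : ∀ ω, E1 ω = 0 ∨ E1 ω = 1)
    (hE2r : ∀ ω, E2 ω = 0 ∨ E2 ω = 1)
    (hDY1r : ∀ ω, DY1 ω = 0 ∨ DY1 ω = 1) (hDY2r : ∀ ω, DY2 ω = 0 ∨ DY2 ω = 1)
    (hE1pr : ∀ a ∈ ({0, 1} : Set ℝ), ∀ ω, E1p a ω = 0 ∨ E1p a ω = 1)
    (hE2pr : ∀ a ∈ ({0, 1} : Set ℝ), ∀ e1 ∈ ({0, 1} : Set ℝ), ∀ ω,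
      E2p a e1 ω = 0 ∨ E2p a e1 ω = 1)
    (hY1pr : ∀ a ∈ ({0, 1} : Set ℝ), ∀ e1 ∈ ({0, 1} : Set ℝ), ∀ ω,
      Y1p a e1 ω = 0 ∨ Y1p a e1 ω = 1)
    (hY2pr : ∀ a ∈ ({0, 1} : Set ℝ), ∀ e2 ∈ ({0, 1} : Set ℝ), ∀ ω,
      Y2p a e2 ω = 0 ∨ Y2p a e2 ω = 1)
    (hWpr : ∀ a ∈ ({0, 1} : Set ℝ), ∀ e1 ∈ ({0, 1} : Set ℝ), ∀ ω,
      Wp a e1 ω = 0 ∨ Wp a e1 ω = 1)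
    (hmono : ∀ ω, DY1 ω = 1 → DY2 ω = 0)
    -- Consistency
    (hconsE1 : ∀ a ∈ ({0, 1} : Set ℝ), ∀ᵐ ω ∂μ, A ω = a → E1 ω = E1p a ω)
    (hconsY1 : ∀ a ∈ ({0, 1} : Set ℝ), ∀ e1 ∈ ({0, 1} : Set ℝ),
      ∀ᵐ ω ∂μ, A ω = a → E1 ω = e1 → DY1 ω = Y1p a e1 ω)
    (hconsE2 : ∀ a ∈ ({0, 1} : Set ℝ), ∀ e1 ∈ ({0, 1} : Set ℝ),
      ∀ᵐ ω ∂μ, A ω = a → E1 ω = e1 → E2 ω = E2p a e1 ω)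
    (hconsY2 : ∀ a ∈ ({0, 1} : Set ℝ), ∀ e2 ∈ ({0, 1} : Set ℝ),
      ∀ᵐ ω ∂μ, A ω = a → E1 ω = 0 → E2 ω = e2 → DY2 ω = Y2p a e2 ω)
    (hconsW : ∀ a ∈ ({0, 1} : Set ℝ), ∀ e1 ∈ ({0, 1} : Set ℝ),
      ∀ᵐ ω ∂μ, A ω = a → E1 ω = e1 → DY1 ω = 0 → E2 ω = 1 → DY2 ω = Wp a e1 ω)
    -- Exposure necessity
    (hnecY1 : ∀ a ∈ ({0, 1} : Set ℝ), ∀ᵐ ω ∂μ, Y1p a 0 ω = 0)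
    (hnecY2 : ∀ a ∈ ({0, 1} : Set ℝ), ∀ᵐ ω ∂μ, Y2p a 0 ω = 0)
    (hnecE2 : ∀ᵐ ω ∂μ, E2 ω = 0 → DY2 ω = 0)
    -- Exclusion restriction
    (hexcl : ∀ a ∈ ({0, 1} : Set ℝ), ∀ᵐ ω ∂μ, Wp a 1 ω = Y2p a 1 ω ∧ Wp a 0 ω = Y2p a 1 ω)
    -- Treatment exchangeability
    (hexch : IndepFun A (fun ω => ![E1p 0 ω, E1p 1 ω,
      E2p 0 0 ω, E2p 0 1 ω, E2p 1 0 ω, E2p 1 1 ω,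
      Y1p 0 0 ω, Y1p 0 1 ω, Y1p 1 0 ω, Y1p 1 1 ω,
      Y2p 0 0 ω, Y2p 0 1 ω, Y2p 1 0 ω, Y2p 1 1 ω,
      Wp 0 0 ω, Wp 0 1 ω, Wp 1 0 ω, Wp 1 1 ω]) μ)
    -- Positivity
    (hpos : 0 < (μ {ω | A ω = 1}).toReal ∧ (μ {ω | A ω = 1}).toReal < 1)
    -- Exposure exchangeability
    (heeY1 : ∀ a ∈ ({0, 1} : Set ℝ), ∀ e1 ∈ ({0, 1} : Set ℝ), IndepFun (E1p a) (Y1p a e1) μ)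
    (heeY2cond : ∀ a ∈ ({0, 1} : Set ℝ), ∀ e2 ∈ ({0, 1} : Set ℝ), ∀ e ∈ ({0, 1} : Set ℝ),
      IndepFun (E1p a) (Y2p a e2) (μ[|{ω | E2p a 0 ω = e}]))
    (heeE2 : ∀ a ∈ ({0, 1} : Set ℝ), ∀ e2 ∈ ({0, 1} : Set ℝ), IndepFun (E2p a 0) (Y2p a e2) μ)
    -- Extended exposure exchangeability
    (hextee1 : ∀ a ∈ ({0, 1} : Set ℝ), ∀ e ∈ ({0, 1} : Set ℝ),
      IndepFun (E1p a) (Wp a 1) (μ[|{ω | Y1p a 1 ω = 0 ∧ E2p a 1 ω = e}]))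
    (hextee2 : ∀ a ∈ ({0, 1} : Set ℝ),
      IndepFun (E2p a 1) (Wp a 1) (μ[|{ω | Y1p a 1 ω = 0}]))
    -- Nondegeneracy (for arm a = 0)
    (hE1pos : 0 < (μ {ω | E1p 0 ω = 1}).toReal)
    (hE1lt : (μ {ω | E1p 0 ω = 1}).toReal < 1)
    (hE1Y1 : 0 < (μ {ω | E1p 0 ω = 1 ∧ Y1p 0 1 ω = 0}).toReal)
    -- Sharp no waning of the placebo
    (hnull0 : ∀ᵐ ω ∂μ, Y1p 0 1 ω = Y2p 0 1 ω)
    (hd4 : 0 < ∫ ω, Y1p 0 1 ω ∂μ)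
    (hd2 : 0 < ∫ ω, DY2 ω ∂(μ[|{ω | A ω = 0}]))
    (p1 q0 : ℝ)
    (hp1 : p1 = (μ {ω | E1p 0 ω = 1}).toReal)
    (hq0 : q0 = ((μ[|{ω | E1p 0 ω = 0}]) {ω | E2p 0 0 ω = 1}).toReal) :
    (∫ ω, DY1 ω ∂(μ[|{ω | A ω = 0}])) / (∫ ω, DY2 ω ∂(μ[|{ω | A ω = 0}])) =
      p1 / (q0 * (1 - p1)) := by
  have h0 : (0:ℝ) ∈ ({0,1} : Set ℝ) := by norm_num
  have h1 : (1:ℝ) ∈ ({0,1} : Set ℝ) := by norm_num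
  obtain ⟨hpos1, hpos2⟩ := hpos
  -- measurability basics
  have mE1p : Measurable (E1p 0) := hE1pm 0 h0
  have mE2p00 : Measurable (E2p 0 0) := hE2pm 0 h0 0 h0
  have mY1p01 : Measurable (Y1p 0 1) := hY1pm 0 h0 1 h1
  have mY2p01 : Measurable (Y2p 0 1) := hY2pm 0 h0 1 h1
  set G : Ω → ℝ := fun ω => E1p 0 ω * Y1p 0 1 ω with hGdef
  set H : Ω → ℝ := fun ω => (1 - E1p 0 ω) * (E2p 0 0 ω * Y2p 0 1 ω) with hHdef
  have mG : Measurable G := mE1p.mul mY1p01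
  have mH : Measurable H := (measurable_const.sub mE1p).mul (mE2p00.mul mY2p01)
  have rG : ∀ ω, G ω = 0 ∨ G ω = 1 := by
    intro ω
    rcases hE1pr 0 h0 ω with h | h <;> rcases hY1pr 0 h0 1 h1 ω with h' | h' <;>
      simp [hGdef, h, h']
  have rH : ∀ ω, H ω = 0 ∨ H ω = 1 := by
    intro ω
    rcases hE1pr 0 h0 ω with h | h <;> rcases hE2pr 0 h0 0 h0 ω with h2 | h2 <;>
      rcases hY2pr 0 h0 1 h1 ω with h' | h' <;> simp [hHdef, h, h2, h']
  -- a.e. identities on the arm A = 0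
  have haeG : ∀ᵐ ω ∂μ, A ω = 0 → DY1 ω = G ω := by
    filter_upwards [hconsE1 0 h0, hconsY1 0 h0 0 h0, hconsY1 0 h0 1 h1, hnecY1 0 h0]
      with ω hcE1 hcY10 hcY11 hn ha
    have hE1 := hcE1 ha
    rcases hE1r ω with he | he
    · have hz : E1p 0 ω = 0 := by rw [← hE1, he]
      rw [hcY10 ha he, hn]; simp [hGdef, hz]
    · have ho : E1p 0 ω = 1 := by rw [← hE1, he]
      rw [hcY11 ha he]; simp [hGdef, ho]
  have haeH : ∀ᵐ ω ∂μ, A ω = 0 → DY2 ω = H ω := by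
    filter_upwards [hconsE1 0 h0, hconsY1 0 h0 1 h1, hconsE2 0 h0 0 h0,
      hconsY2 0 h0 1 h1, hnecE2, hconsW 0 h0 1 h1, hexcl 0 h0, hnull0]
      with ω hcE1 hcY11 hcE2 hcY21 hne hcW hex hnw ha
    have hE1 := hcE1 ha
    rcases hE1r ω with he | he
    · have hE1p0 : E1p 0 ω = 0 := by rw [← hE1, he]
      have hE2 := hcE2 ha he
      rcases hE2r ω with he2 | he2
      · have hz : E2p 0 0 ω = 0 := by rw [← hE2, he2]
        rw [hne he2]; simp [hHdef, hz]
      · have h21 : E2p 0 0 ω = 1 := by rw [← hE2, he2]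
        rw [hcY21 ha he he2]; simp [hHdef, hE1p0, h21]
    · have hE1p1 : E1p 0 ω = 1 := by rw [← hE1, he]
      have hHz : H ω = 0 := by simp [hHdef, hE1p1]
      rw [hHz]
      rcases hDY1r ω with hd | hd
      · have hy1 : Y1p 0 1 ω = 0 := by rw [← hcY11 ha he, hd]
        rcases hE2r ω with he2 | he2
        · exact hne he2
        · rw [hcW ha he hd he2, hex.1, ← hnw, hy1]
      · exact hmono ω hd
  -- the set {A = 0}
  have ms0 : MeasurableSet {ω | A ω = 0} := hAm (measurableSet_singleton 0)
  have hcompl : {ω | A ω = 0} = {ω | A ω = 1}ᶜ := by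
    ext ω; rcases hAr ω with h | h <;> simp [h]
  have hA1lt : μ {ω | A ω = 1} < 1 := by
    by_contra hle
    push_neg at hle
    have heq : μ {ω | A ω = 1} = 1 := le_antisymm prob_le_one hle
    rw [heq] at hpos2
    simp at hpos2
  have ms1 : MeasurableSet {ω | A ω = 1} := hAm (measurableSet_singleton 1)
  have hs0ne : μ {ω | A ω = 0} ≠ 0 := by
    rw [hcompl, prob_compl_eq_one_sub ms1]
    intro hz
    exact hA1lt.not_ge (tsub_eq_zero_iff_le.mp hz)
  have hs0t : (μ {ω | A ω = 0}).toReal ≠ 0 :=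
    ENNReal.toReal_ne_zero.mpr ⟨hs0ne, measure_ne_top μ _⟩
  -- independence of {A = 0} indicator from G and H (via treatment exchangeability)
  have hφm : Measurable (fun x : ℝ => if x = 0 then (1:ℝ) else 0) :=
    Measurable.ite (measurableSet_eq) measurable_const measurable_const
  set Z : Ω → ℝ := fun ω => if A ω = 0 then (1:ℝ) else 0 with hZdef
  have hZm : Measurable Z := hφm.comp hAm
  have hZr : ∀ ω, Z ω = 0 ∨ Z ω = 1 := by
    intro ω; by_cases h : A ω = 0 <;> simp [hZdef, h]
  have hZset : {ω | Z ω = 1} = {ω | A ω = 0} := by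
    ext ω; by_cases h : A ω = 0 <;> simp [hZdef, h]
  have e2 : (2 : Fin 18) = ⟨2, by norm_num⟩ := rfl
  have e7 : (7 : Fin 18) = ⟨7, by norm_num⟩ := rfl
  have e11 : (11 : Fin 18) = ⟨11, by norm_num⟩ := rfl
  have hindG : IndepFun Z G μ := by
    have hg : Measurable (fun v : Fin 18 → ℝ => v 0 * v 7) :=
      (measurable_pi_apply 0).mul (measurable_pi_apply 7)
    have hI := hexch.comp hφm hg
    have hfun : ((fun v : Fin 18 → ℝ => v 0 * v 7) ∘ (fun ω => ![E1p 0 ω, E1p 1 ω,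
      E2p 0 0 ω, E2p 0 1 ω, E2p 1 0 ω, E2p 1 1 ω,
      Y1p 0 0 ω, Y1p 0 1 ω, Y1p 1 0 ω, Y1p 1 1 ω,
      Y2p 0 0 ω, Y2p 0 1 ω, Y2p 1 0 ω, Y2p 1 1 ω,
      Wp 0 0 ω, Wp 0 1 ω, Wp 1 0 ω, Wp 1 1 ω])) = G := by
      funext ω
      show _ * _ = G ω
      rw [e7]
      simp only [Matrix.cons_val_succ', Matrix.cons_val_zero', Matrix.cons_val_zero, hGdef]
    rw [hfun] at hI
    exact hI
  have hindH : IndepFun Z H μ := by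
    have hg : Measurable (fun v : Fin 18 → ℝ => (1 - v 0) * (v 2 * v 11)) :=
      ((measurable_const.sub (measurable_pi_apply 0)).mul
        ((measurable_pi_apply 2).mul (measurable_pi_apply 11)))
    have hI := hexch.comp hφm hg
    have hfun : ((fun v : Fin 18 → ℝ => (1 - v 0) * (v 2 * v 11)) ∘ (fun ω => ![E1p 0 ω, E1p 1 ω,
      E2p 0 0 ω, E2p 0 1 ω, E2p 1 0 ω, E2p 1 1 ω,
      Y1p 0 0 ω, Y1p 0 1 ω, Y1p 1 0 ω, Y1p 1 1 ω,
      Y2p 0 0 ω, Y2p 0 1 ω, Y2p 1 0 ω, Y2p 1 1 ω,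
      Wp 0 0 ω, Wp 0 1 ω, Wp 1 0 ω, Wp 1 1 ω])) = H := by
      funext ω
      show (1 - _) * (_ * _) = H ω
      rw [e2, e11]
      simp only [Matrix.cons_val_succ', Matrix.cons_val_zero', Matrix.cons_val_zero, hHdef]
    rw [hfun] at hI
    exact hI
  -- reduce conditional integrals to population integrals
  have key : ∀ (D F : Ω → ℝ), Measurable F → (∀ ω, F ω = 0 ∨ F ω = 1) →
      IndepFun Z F μ → (∀ᵐ ω ∂μ, A ω = 0 → D ω = F ω) →
      ∫ ω, D ω ∂(μ[|{ω | A ω = 0}]) = ∫ ω, F ω ∂μ := by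
    intro D F hFm hFr hind hae
    rw [cond_integral_eq]
    have hcongr : ∫ ω in {ω | A ω = 0}, D ω ∂μ = ∫ ω in {ω | A ω = 0}, F ω ∂μ :=
      integral_congr_ae ((ae_restrict_iff' ms0).2 hae)
    have hpull := indep_setIntegral μ hZm hFm hZr hind
    rw [hZset] at hpull
    rw [hcongr, hpull, ← mul_assoc, ENNReal.toReal_inv, inv_mul_cancel₀ hs0t, one_mul]
  have key1 : ∫ ω, DY1 ω ∂(μ[|{ω | A ω = 0}]) = ∫ ω, G ω ∂μ := key DY1 G mG rG hindG haeG
  have key2 : ∫ ω, DY2 ω ∂(μ[|{ω | A ω = 0}]) = ∫ ω, H ω ∂μ := key DY2 H mH rH hindH haeH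
  -- compute ∫ G
  have hbinE1 := bin_integral μ mE1p (hE1pr 0 h0)
  have hGint : ∫ ω, G ω ∂μ = p1 * ∫ ω, Y1p 0 1 ω ∂μ := by
    have hGmul : G = E1p 0 * Y1p 0 1 := rfl
    rw [hGmul, (heeY1 0 h0 1 h1).integral_mul_eq_mul_integral mE1p.aestronglyMeasurable
      mY1p01.aestronglyMeasurable, hbinE1.2, ← hp1]
  -- compute ∫ H
  have hY2eqY1 : ∫ ω, Y2p 0 1 ω ∂μ = ∫ ω, Y1p 0 1 ω ∂μ :=
    integral_congr_ae (by filter_upwards [hnull0] with ω h using h.symm)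
  have mT : MeasurableSet {ω | E2p 0 0 ω = 1} := mE2p00 (measurableSet_singleton 1)
  have mS : MeasurableSet {ω | E1p 0 ω = 0} := mE1p (measurableSet_singleton 0)
  set K : Ω → ℝ := fun ω => (1 - E1p 0 ω) * Y2p 0 1 ω with hKdef
  have mK : Measurable K := (measurable_const.sub mE1p).mul mY2p01
  have hHK : H = Set.indicator {ω | E2p 0 0 ω = 1} K := by
    funext ω
    rcases hE2pr 0 h0 0 h0 ω with h | h
    · simp [hHdef, hKdef, Set.indicator_apply, h]
    · simp [hHdef, hKdef, Set.indicator_apply, h]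
  have hHpos : 0 < ∫ ω, H ω ∂μ := by rw [← key2]; exact hd2
  have hTne : μ {ω | E2p 0 0 ω = 1} ≠ 0 := by
    intro hz
    rw [hHK, integral_indicator mT, Measure.restrict_eq_zero.mpr hz,
      integral_zero_measure] at hHpos
    exact lt_irrefl 0 hHpos
  have hTt : (μ {ω | E2p 0 0 ω = 1}).toReal ≠ 0 :=
    ENNReal.toReal_ne_zero.mpr ⟨hTne, measure_ne_top μ _⟩
  haveI hPT : IsProbabilityMeasure (μ[|{ω | E2p 0 0 ω = 1}]) :=
    cond_isProbabilityMeasure hTne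
  have hY2T : ∫ ω, Y2p 0 1 ω ∂(μ[|{ω | E2p 0 0 ω = 1}]) = ∫ ω, Y2p 0 1 ω ∂μ := by
    rw [cond_integral_eq,
      indep_setIntegral μ mE2p00 mY2p01 (hE2pr 0 h0 0 h0) (heeE2 0 h0 1 h1),
      ← mul_assoc, ENNReal.toReal_inv, inv_mul_cancel₀ hTt, one_mul]
  have hsubm : Measurable (fun x : ℝ => 1 - x) := measurable_const.sub measurable_id
  have hcondind : IndepFun (fun ω => 1 - E1p 0 ω) (Y2p 0 1) (μ[|{ω | E2p 0 0 ω = 1}]) :=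
    (heeY2cond 0 h0 1 h1 1 h1).comp hsubm measurable_id
  have hbin1mE1 := bin_integral (X := fun ω => (1:ℝ) - E1p 0 ω) (μ[|{ω | E2p 0 0 ω = 1}])
      (measurable_const.sub mE1p)
      (fun ω => by rcases hE1pr 0 h0 ω with h | h <;> simp [h])
  have hset1m : {ω | (1 : ℝ) - E1p 0 ω = 1} = {ω | E1p 0 ω = 0} := by
    ext ω
    constructor <;> intro h <;> simp only [Set.mem_setOf_eq] at * <;> linarith
  have hKT : ∫ ω, K ω ∂(μ[|{ω | E2p 0 0 ω = 1}]) =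
      ((μ[|{ω | E2p 0 0 ω = 1}]) {ω | E1p 0 ω = 0}).toReal * ∫ ω, Y2p 0 1 ω ∂μ := by
    have hKmul : K = (fun ω => 1 - E1p 0 ω) * (Y2p 0 1) := rfl
    rw [hKmul, hcondind.integral_mul_eq_mul_integral (measurable_const.sub mE1p).aestronglyMeasurable
      mY2p01.aestronglyMeasurable, hY2T]
    congr 1
    rw [hbin1mE1.2, hset1m]
  have hHint : ∫ ω, H ω ∂μ = (μ {ω | E2p 0 0 ω = 1}).toReal *
      (((μ[|{ω | E2p 0 0 ω = 1}]) {ω | E1p 0 ω = 0}).toReal * ∫ ω, Y2p 0 1 ω ∂μ) := by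
    rw [hHK, integral_indicator mT]
    have h2 : ∫ ω in {ω | E2p 0 0 ω = 1}, K ω ∂μ =
        (μ {ω | E2p 0 0 ω = 1}).toReal * ∫ ω, K ω ∂(μ[|{ω | E2p 0 0 ω = 1}]) := by
      rw [cond_integral_eq, ← mul_assoc, ENNReal.toReal_inv, mul_inv_cancel₀ hTt, one_mul]
    rw [h2, hKT]
  -- identify the coefficient with q0 * (1 - p1)
  have hSne : (μ {ω | E1p 0 ω = 0}).toReal = 1 - p1 := by
    have hun : {ω | E1p 0 ω = 1} ∪ {ω | E1p 0 ω = 0} = Set.univ := by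
      ext ω; rcases hE1pr 0 h0 ω with h | h <;> simp [h]
    have hdis : Disjoint {ω | E1p 0 ω = 1} {ω | E1p 0 ω = 0} := by
      rw [Set.disjoint_left]
      intro ω hω1 hω0
      simp only [Set.mem_setOf_eq] at hω1 hω0
      rw [hω0] at hω1
      norm_num at hω1
    have hsum : μ {ω | E1p 0 ω = 1} + μ {ω | E1p 0 ω = 0} = 1 := by
      rw [← measure_union hdis mS, hun, measure_univ]
    have h := congrArg ENNReal.toReal hsum
    rw [ENNReal.toReal_add (measure_ne_top μ _) (measure_ne_top μ _)] at h
    simp only [ENNReal.toReal_one] at h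
    rw [hp1]
    linarith
  have hStpos : (0:ℝ) < (μ {ω | E1p 0 ω = 0}).toReal := by
    rw [hSne, hp1]
    linarith [hE1lt]
  have hSt : (μ {ω | E1p 0 ω = 0}).toReal ≠ 0 := hStpos.ne'
  have hcoef : (μ {ω | E2p 0 0 ω = 1}).toReal *
      ((μ[|{ω | E2p 0 0 ω = 1}]) {ω | E1p 0 ω = 0}).toReal = q0 * (1 - p1) := by
    rw [cond_apply mT μ {ω | E1p 0 ω = 0}, hq0, cond_apply mS μ {ω | E2p 0 0 ω = 1},
      Set.inter_comm {ω | E2p 0 0 ω = 1} {ω | E1p 0 ω = 0},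
      ENNReal.toReal_mul, ENNReal.toReal_mul, ENNReal.toReal_inv, ENNReal.toReal_inv, ← hSne]
    field_simp
  have hHfinal : ∫ ω, H ω ∂μ = (q0 * (1 - p1)) * ∫ ω, Y1p 0 1 ω ∂μ := by
    rw [hHint, hY2eqY1, ← mul_assoc, hcoef]
  rw [key1, key2, hGint, hHfinal, mul_div_mul_right _ _ hd4.ne']
end

section
/- Second-interval hazard ratio under the null in the explicit data-generating model. In the explicit model, assume 0 < q1 < 1, 0 < q2, πA ∈ (0,1), pd + ph < 1, pd + pr < 1, pd + ph > 0 and pd + pr > 0 (so all conditional expectations below are well defined). Then the second-interval hazard ratio satisfies HR2 := E[ΔY2 | ΔY1 = 0, A = 1] / E[ΔY2 | ΔY1 = 0, A = 0] = ((pd + pr)/(pd + ph)) · ((1 − (pd + ph))·q1 + (1 − q1)) / ((1 − (pd + pr))·q1 + (1 − q1)). In particular, even though the principal strata are constant over time (the sharp null of no waning holds by construction), HR2 differs from the first-interval hazard ratio HR1 := E[ΔY1 | A = 1]/E[ΔY1 | A = 0] = (pd + pr)/(pd + ph) by the factor ((1 − (pd + ph))·q1 + (1 − q1)) / ((1 −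 (pd + pr))·q1 + (1 − q1)). -/
open MeasureTheory ProbabilityTheory
open scoped ProbabilityTheory Classical

lemma aux_cond_integral {Ω : Type*} [MeasurableSpace Ω] (μ : Measure Ω) [IsFiniteMeasure μ]
    (f : Ω → ℝ) (s G : Set Ω) (hs : MeasurableSet s) (hG : MeasurableSet G)
    (hf : ∀ ω ∈ s, f ω = if ω ∈ G then 1 else 0) :
    ∫ ω, f ω ∂(μ[|s]) = (μ s).toReal⁻¹ * (μ (s ∩ G)).toReal := by
  rw [ProbabilityTheory.cond, integral_smul_measure,
    setIntegral_congr_fun hs (g := G.indicator fun _ => (1:ℝ))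
      (fun ω hω => by rw [hf ω hω, Set.indicator_apply]),
    setIntegral_indicator hG, setIntegral_const]
  simp [ENNReal.toReal_inv, measureReal_def]

lemma aux_quad {Ω : Type*} [MeasurableSpace Ω] (μ : Measure Ω) [IsProbabilityMeasure μ]
    (A T E1 B2 : Ω → ℝ)
    (hindep : iIndepFun (m := fun _ : Fin 4 => (inferInstance : MeasurableSpace ℝ))
      ![A, T, E1, B2] μ)
    (sa st se sb : Set ℝ) (ha : MeasurableSet sa) (ht : MeasurableSet st)
    (he : MeasurableSet se) (hb : MeasurableSet sb) :
    (μ (A ⁻¹' sa ∩ T ⁻¹' st ∩ E1 ⁻¹' se ∩ B2 ⁻¹' sb)).toReal =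
      (μ (A ⁻¹' sa)).toReal * (μ (T ⁻¹' st)).toReal * (μ (E1 ⁻¹' se)).toReal *
        (μ (B2 ⁻¹' sb)).toReal := by
  have h := hindep.measure_inter_preimage_eq_mul (S := Finset.univ)
    (sets := ![sa, st, se, sb]) (fun i _ => by fin_cases i <;> simpa)
  have hset : (⋂ i ∈ (Finset.univ : Finset (Fin 4)),
      ![A, T, E1, B2] i ⁻¹' ![sa, st, se, sb] i) =
      A ⁻¹' sa ∩ T ⁻¹' st ∩ E1 ⁻¹' se ∩ B2 ⁻¹' sb := by
    ext ω
    simp [Fin.forall_fin_succ, Set.mem_iInter, and_assoc]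
  rw [hset, Fin.prod_univ_four] at h
  rw [h]
  simp [ENNReal.toReal_mul]

set_option maxHeartbeats 1000000 in
/-- Second-interval hazard ratio under the null in the explicit data-generating model. -/
theorem hazard_ratio_time_two_explicit_model
    {Ω : Type*} [MeasurableSpace Ω] (μ : Measure Ω) [IsProbabilityMeasure μ]
    (A T E1 B2 DY1 E2 DY2 : Ω → ℝ)
    (hAm : Measurable A) (hTm : Measurable T) (hE1m : Measurable E1) (hB2m : Measurable B2)
    (piA pd ph pr pim q1 q2 : ℝ)
    -- mutual independence of A, T, E1, B2
    (hindep : iIndepFun (m := fun _ : Fin 4 => (inferInstance : MeasurableSpace ℝ))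
      ![A, T, E1, B2] μ)
    -- ranges
    (hAr : ∀ ω, A ω = 0 ∨ A ω = 1)
    (hTr : ∀ ω, T ω = 1 ∨ T ω = 2 ∨ T ω = 3 ∨ T ω = 4)
    (hE1r : ∀ ω, E1 ω = 0 ∨ E1 ω = 1)
    (hB2r : ∀ ω, B2 ω = 0 ∨ B2 ω = 1)
    -- marginal distributions
    (hA1 : (μ {ω | A ω = 1}).toReal = piA)
    (hT1 : (μ {ω | T ω = 1}).toReal = pd)
    (hT2 : (μ {ω | T ω = 2}).toReal = ph)
    (hT3 : (μ {ω | T ω = 3}).toReal = pr)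
    (hT4 : (μ {ω | T ω = 4}).toReal = pim)
    (hE11 : (μ {ω | E1 ω = 1}).toReal = q1)
    (hB21 : (μ {ω | B2 ω = 1}).toReal = q2)
    (hsumT : pd + ph + pr + pim = 1)
    -- structural equations
    (hDY1 : ∀ ω, DY1 ω = E1 ω *
      ((if T ω = 1 then 1 else 0) + (1 - A ω) * (if T ω = 2 then 1 else 0) +
        A ω * (if T ω = 3 then 1 else 0)))
    (hE2 : ∀ ω, E2 ω = (1 - DY1 ω) * B2 ω)
    (hDY2 : ∀ ω, DY2 ω = E2 ω *
      ((if T ω = 1 then 1 else 0) + (1 - A ω) * (if T ω = 2 then 1 else 0) +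
        A ω * (if T ω = 3 then 1 else 0)))
    -- parameter constraints
    (hq1pos : 0 < q1) (hq1lt : q1 < 1) (hq2pos : 0 < q2)
    (hpiApos : 0 < piA) (hpiAlt : piA < 1)
    (hphlt : pd + ph < 1) (hprlt : pd + pr < 1)
    (hphpos : 0 < pd + ph) (hprpos : 0 < pd + pr)
    :
    (∫ ω, DY1 ω ∂(μ[|{ω | A ω = 1}])) / (∫ ω, DY1 ω ∂(μ[|{ω | A ω = 0}])) =
      (pd + pr) / (pd + ph) ∧
    (∫ ω, DY2 ω ∂(μ[|{ω | DY1 ω = 0 ∧ A ω = 1}])) /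
        (∫ ω, DY2 ω ∂(μ[|{ω | DY1 ω = 0 ∧ A ω = 0}])) =
      ((pd + pr) / (pd + ph)) *
        (((1 - (pd + ph)) * q1 + (1 - q1)) / ((1 - (pd + pr)) * q1 + (1 - q1))) := by
  -- measurability of atomic sets
  have mA1 : MeasurableSet (A ⁻¹' ({1} : Set ℝ)) := hAm (measurableSet_singleton 1)
  have mA0 : MeasurableSet (A ⁻¹' ({0} : Set ℝ)) := hAm (measurableSet_singleton 0)
  have mE1 : MeasurableSet (E1 ⁻¹' ({1} : Set ℝ)) := hE1m (measurableSet_singleton 1)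
  have mE0 : MeasurableSet (E1 ⁻¹' ({0} : Set ℝ)) := hE1m (measurableSet_singleton 0)
  have mB1 : MeasurableSet (B2 ⁻¹' ({1} : Set ℝ)) := hB2m (measurableSet_singleton 1)
  have mT13 : MeasurableSet (T ⁻¹' ({1, 3} : Set ℝ)) :=
    hTm ((measurableSet_singleton (3:ℝ)).insert 1)
  have mT12 : MeasurableSet (T ⁻¹' ({1, 2} : Set ℝ)) :=
    hTm ((measurableSet_singleton (2:ℝ)).insert 1)
  have mT24 : MeasurableSet (T ⁻¹' ({2, 4} : Set ℝ)) :=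
    hTm ((measurableSet_singleton (4:ℝ)).insert 2)
  have mT34 : MeasurableSet (T ⁻¹' ({3, 4} : Set ℝ)) :=
    hTm ((measurableSet_singleton (4:ℝ)).insert 3)
  -- complement helper
  have hcompl : ∀ s : Set Ω, MeasurableSet s → (μ sᶜ).toReal = 1 - (μ s).toReal := by
    intro s hs
    have h1 : μ s + μ sᶜ = 1 := by rw [measure_add_measure_compl hs, measure_univ]
    have h2 := congrArg ENNReal.toReal h1
    rw [ENNReal.toReal_add (measure_ne_top μ s) (measure_ne_top μ sᶜ)] at h2
    simp at h2
    linarith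
  -- union helper
  have hunion : ∀ s t : Set Ω, MeasurableSet t → Disjoint s t →
      (μ (s ∪ t)).toReal = (μ s).toReal + (μ t).toReal := by
    intro s t ht hd
    rw [measure_union hd ht,
      ENNReal.toReal_add (measure_ne_top _ _) (measure_ne_top _ _)]
  -- pair helper
  have hpair : ∀ (f : Ω → ℝ), Measurable f → ∀ a b : ℝ, a ≠ b →
      (μ (f ⁻¹' {a, b})).toReal = (μ (f ⁻¹' {a})).toReal + (μ (f ⁻¹' {b})).toReal := by
    intro f hf a b hab
    have hu : f ⁻¹' ({a, b} : Set ℝ) = f ⁻¹' {a} ∪ f ⁻¹' {b} := by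
      ext ω; simp [Set.mem_preimage]
    have hd : Disjoint (f ⁻¹' ({a} : Set ℝ)) (f ⁻¹' {b}) :=
      Set.disjoint_left.2 fun ω h1 h2 => hab (by
        simp only [Set.mem_preimage, Set.mem_singleton_iff] at h1 h2
        rw [← h1, ← h2])
    rw [hu, hunion _ _ (hf (measurableSet_singleton b)) hd]
  -- marginals
  have mA1R : (μ (A ⁻¹' ({1} : Set ℝ))).toReal = piA := hA1
  have mE1R : (μ (E1 ⁻¹' ({1} : Set ℝ))).toReal = q1 := hE11
  have mB1R : (μ (B2 ⁻¹' ({1} : Set ℝ))).toReal = q2 := hB21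
  have hA0c : A ⁻¹' ({0} : Set ℝ) = (A ⁻¹' ({1} : Set ℝ))ᶜ := by
    ext ω; rcases hAr ω with h | h <;> norm_num [h]
  have mA0R : (μ (A ⁻¹' ({0} : Set ℝ))).toReal = 1 - piA := by
    rw [hA0c, hcompl _ mA1, mA1R]
  have hE0c : E1 ⁻¹' ({0} : Set ℝ) = (E1 ⁻¹' ({1} : Set ℝ))ᶜ := by
    ext ω; rcases hE1r ω with h | h <;> norm_num [h]
  have mE0R : (μ (E1 ⁻¹' ({0} : Set ℝ))).toReal = 1 - q1 := by
    rw [hE0c, hcompl _ mE1, mE1R]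
  have mT13R : (μ (T ⁻¹' ({1, 3} : Set ℝ))).toReal = pd + pr := by
    rw [hpair T hTm 1 3 (by norm_num)]
    simp only [Set.preimage, Set.mem_singleton_iff]
    rw [hT1, hT3]
  have mT12R : (μ (T ⁻¹' ({1, 2} : Set ℝ))).toReal = pd + ph := by
    rw [hpair T hTm 1 2 (by norm_num)]
    simp only [Set.preimage, Set.mem_singleton_iff]
    rw [hT1, hT2]
  have mT24R : (μ (T ⁻¹' ({2, 4} : Set ℝ))).toReal = ph + pim := by
    rw [hpair T hTm 2 4 (by norm_num)]
    simp only [Set.preimage, Set.mem_singleton_iff]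
    rw [hT2, hT4]
  have mT34R : (μ (T ⁻¹' ({3, 4} : Set ℝ))).toReal = pr + pim := by
    rw [hpair T hTm 3 4 (by norm_num)]
    simp only [Set.preimage, Set.mem_singleton_iff]
    rw [hT3, hT4]
  -- nonzero facts
  have hq1ne : q1 ≠ 0 := ne_of_gt hq1pos
  have h1q1 : (1 : ℝ) - q1 ≠ 0 := by linarith
  have hpiAne : piA ≠ 0 := ne_of_gt hpiApos
  have h1piA : (1 : ℝ) - piA ≠ 0 := by linarith
  have hphne : pd + ph ≠ 0 := ne_of_gt hphpos
  have hprne : pd + pr ≠ 0 := ne_of_gt hprpos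
  have hq2ne : q2 ≠ 0 := ne_of_gt hq2pos
  have hphpim : ph + pim = 1 - (pd + pr) := by linarith
  have hprpim : pr + pim = 1 - (pd + ph) := by linarith
  -- first interval, A = 1
  have hnum1 : (μ ({ω | A ω = 1} ∩ (E1 ⁻¹' {1} ∩ T ⁻¹' ({1, 3} : Set ℝ)))).toReal
      = piA * (pd + pr) * q1 := by
    have hset : {ω | A ω = 1} ∩ (E1 ⁻¹' {1} ∩ T ⁻¹' ({1, 3} : Set ℝ)) =
        A ⁻¹' {1} ∩ T ⁻¹' ({1, 3} : Set ℝ) ∩ E1 ⁻¹' {1} ∩ B2 ⁻¹' Set.univ := by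
      ext ω; simp [Set.mem_preimage]; tauto
    rw [hset, aux_quad μ A T E1 B2 hindep _ _ _ _ (measurableSet_singleton 1)
      ((measurableSet_singleton (3:ℝ)).insert 1) (measurableSet_singleton 1)
      MeasurableSet.univ]
    simp [mA1R, mT13R, mE1R]
  have hI1 : (∫ ω, DY1 ω ∂(μ[|{ω | A ω = 1}])) = piA⁻¹ * (piA * (pd + pr) * q1) := by
    rw [aux_cond_integral μ DY1 {ω | A ω = 1} (E1 ⁻¹' {1} ∩ T ⁻¹' ({1, 3} : Set ℝ)) mA1
      (mE1.inter mT13) ?_, hA1, hnum1]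
    intro ω hω
    have hA : A ω = 1 := hω
    rcases hE1r ω with hE | hE <;> rcases hTr ω with hT | hT | hT | hT <;>
      norm_num [hDY1 ω, hA, hE, hT, Set.mem_preimage]
  -- first interval, A = 0
  have hnum0 : (μ ({ω | A ω = 0} ∩ (E1 ⁻¹' {1} ∩ T ⁻¹' ({1, 2} : Set ℝ)))).toReal
      = (1 - piA) * (pd + ph) * q1 := by
    have hset : {ω | A ω = 0} ∩ (E1 ⁻¹' {1} ∩ T ⁻¹' ({1, 2} : Set ℝ)) =
        A ⁻¹' {0} ∩ T ⁻¹' ({1, 2} : Set ℝ) ∩ E1 ⁻¹' {1} ∩ B2 ⁻¹' Set.univ := by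
      ext ω; simp [Set.mem_preimage]; tauto
    rw [hset, aux_quad μ A T E1 B2 hindep _ _ _ _ (measurableSet_singleton 0)
      ((measurableSet_singleton (2:ℝ)).insert 1) (measurableSet_singleton 1)
      MeasurableSet.univ]
    simp [mA0R, mT12R, mE1R]
  have hI0 : (∫ ω, DY1 ω ∂(μ[|{ω | A ω = 0}])) =
      (1 - piA)⁻¹ * ((1 - piA) * (pd + ph) * q1) := by
    have hs0 : (μ {ω | A ω = 0}).toReal = 1 - piA := mA0R
    rw [aux_cond_integral μ DY1 {ω | A ω = 0} (E1 ⁻¹' {1} ∩ T ⁻¹' ({1, 2} : Set ℝ)) mA0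
      (mE1.inter mT12) ?_, hs0, hnum0]
    intro ω hω
    have hA : A ω = 0 := hω
    rcases hE1r ω with hE | hE <;> rcases hTr ω with hT | hT | hT | hT <;>
      norm_num [hDY1 ω, hA, hE, hT, Set.mem_preimage]
  -- second interval: event decompositions, A = 1
  have hs2eq1 : {ω | DY1 ω = 0 ∧ A ω = 1} =
      A ⁻¹' {1} ∩ (E1 ⁻¹' {0} ∪ T ⁻¹' ({2, 4} : Set ℝ)) := by
    ext ω
    rcases hE1r ω with hE | hE <;> rcases hTr ω with hT | hT | hT | hT <;>
      rcases hAr ω with hA | hA <;>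
      norm_num [hDY1 ω, hA, hE, hT, Set.mem_preimage]
  have hs2eq0 : {ω | DY1 ω = 0 ∧ A ω = 0} =
      A ⁻¹' {0} ∩ (E1 ⁻¹' {0} ∪ T ⁻¹' ({3, 4} : Set ℝ)) := by
    ext ω
    rcases hE1r ω with hE | hE <;> rcases hTr ω with hT | hT | hT | hT <;>
      rcases hAr ω with hA | hA <;>
      norm_num [hDY1 ω, hA, hE, hT, Set.mem_preimage]
  have ms21 : MeasurableSet {ω | DY1 ω = 0 ∧ A ω = 1} := by
    rw [hs2eq1]; exact mA1.inter (mE0.union mT24)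
  have ms20 : MeasurableSet {ω | DY1 ω = 0 ∧ A ω = 0} := by
    rw [hs2eq0]; exact mA0.inter (mE0.union mT34)
  -- measures of the conditioning events
  have hsplit1 : A ⁻¹' ({1} : Set ℝ) ∩ (E1 ⁻¹' {0} ∪ T ⁻¹' ({2, 4} : Set ℝ)) =
      (A ⁻¹' {1} ∩ T ⁻¹' Set.univ ∩ E1 ⁻¹' {0} ∩ B2 ⁻¹' Set.univ) ∪
        (A ⁻¹' {1} ∩ T ⁻¹' ({2, 4} : Set ℝ) ∩ E1 ⁻¹' {1} ∩ B2 ⁻¹' Set.univ) := by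
    ext ω; rcases hE1r ω with hE | hE <;> norm_num [hE, Set.mem_preimage]
  have hsplit0 : A ⁻¹' ({0} : Set ℝ) ∩ (E1 ⁻¹' {0} ∪ T ⁻¹' ({3, 4} : Set ℝ)) =
      (A ⁻¹' {0} ∩ T ⁻¹' Set.univ ∩ E1 ⁻¹' {0} ∩ B2 ⁻¹' Set.univ) ∪
        (A ⁻¹' {0} ∩ T ⁻¹' ({3, 4} : Set ℝ) ∩ E1 ⁻¹' {1} ∩ B2 ⁻¹' Set.univ) := by
    ext ω; rcases hE1r ω with hE | hE <;> norm_num [hE, Set.mem_preimage]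
  have hdisj : ∀ (sa st sa' st' : Set ℝ),
      Disjoint (A ⁻¹' sa ∩ T ⁻¹' st ∩ E1 ⁻¹' {0} ∩ B2 ⁻¹' Set.univ)
        (A ⁻¹' sa' ∩ T ⁻¹' st' ∩ E1 ⁻¹' {1} ∩ B2 ⁻¹' Set.univ) := by
    intro sa st sa' st'
    refine Set.disjoint_left.2 fun ω h1 h2 => ?_
    have e0 : E1 ω = 0 := h1.1.2
    have e1 : E1 ω = 1 := h2.1.2
    norm_num [e0] at e1
  have hs2m1 : (μ {ω | DY1 ω = 0 ∧ A ω = 1}).toReal =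
      piA * (1 - q1) + piA * (ph + pim) * q1 := by
    rw [hs2eq1, hsplit1, hunion _ _
      (((mA1.inter mT24).inter mE1).inter (hB2m MeasurableSet.univ)) (hdisj _ _ _ _),
      aux_quad μ A T E1 B2 hindep _ _ _ _ (measurableSet_singleton 1)
        MeasurableSet.univ (measurableSet_singleton 0) MeasurableSet.univ,
      aux_quad μ A T E1 B2 hindep _ _ _ _ (measurableSet_singleton 1)
        ((measurableSet_singleton (4:ℝ)).insert 2) (measurableSet_singleton 1)
        MeasurableSet.univ]
    simp [mA1R, mE0R, mE1R, mT24R]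
  have hs2m0 : (μ {ω | DY1 ω = 0 ∧ A ω = 0}).toReal =
      (1 - piA) * (1 - q1) + (1 - piA) * (pr + pim) * q1 := by
    rw [hs2eq0, hsplit0, hunion _ _
      (((mA0.inter mT34).inter mE1).inter (hB2m MeasurableSet.univ)) (hdisj _ _ _ _),
      aux_quad μ A T E1 B2 hindep _ _ _ _ (measurableSet_singleton 0)
        MeasurableSet.univ (measurableSet_singleton 0) MeasurableSet.univ,
      aux_quad μ A T E1 B2 hindep _ _ _ _ (measurableSet_singleton 0)
        ((measurableSet_singleton (4:ℝ)).insert 3) (measurableSet_singleton 1)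
        MeasurableSet.univ]
    simp [mA0R, mE0R, mE1R, mT34R]
  -- numerators of second interval
  have hnum21 : (μ ({ω | DY1 ω = 0 ∧ A ω = 1} ∩
        (T ⁻¹' ({1, 3} : Set ℝ) ∩ B2 ⁻¹' {1}))).toReal
      = piA * (pd + pr) * (1 - q1) * q2 := by
    have hset : {ω | DY1 ω = 0 ∧ A ω = 1} ∩ (T ⁻¹' ({1, 3} : Set ℝ) ∩ B2 ⁻¹' {1}) =
        A ⁻¹' {1} ∩ T ⁻¹' ({1, 3} : Set ℝ) ∩ E1 ⁻¹' {0} ∩ B2 ⁻¹' {1} := by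
      ext ω
      rcases hE1r ω with hE | hE <;> rcases hTr ω with hT | hT | hT | hT <;>
        rcases hAr ω with hA | hA <;>
        norm_num [hDY1 ω, hA, hE, hT, Set.mem_preimage]
    rw [hset, aux_quad μ A T E1 B2 hindep _ _ _ _ (measurableSet_singleton 1)
      ((measurableSet_singleton (3:ℝ)).insert 1) (measurableSet_singleton 0)
      (measurableSet_singleton 1)]
    rw [mA1R, mT13R, mE0R, mB1R]
  have hnum20 : (μ ({ω | DY1 ω = 0 ∧ A ω = 0} ∩
        (T ⁻¹' ({1, 2} : Set ℝ) ∩ B2 ⁻¹' {1}))).toReal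
      = (1 - piA) * (pd + ph) * (1 - q1) * q2 := by
    have hset : {ω | DY1 ω = 0 ∧ A ω = 0} ∩ (T ⁻¹' ({1, 2} : Set ℝ) ∩ B2 ⁻¹' {1}) =
        A ⁻¹' {0} ∩ T ⁻¹' ({1, 2} : Set ℝ) ∩ E1 ⁻¹' {0} ∩ B2 ⁻¹' {1} := by
      ext ω
      rcases hE1r ω with hE | hE <;> rcases hTr ω with hT | hT | hT | hT <;>
        rcases hAr ω with hA | hA <;>
        norm_num [hDY1 ω, hA, hE, hT, Set.mem_preimage]
    rw [hset, aux_quad μ A T E1 B2 hindep _ _ _ _ (measurableSet_singleton 0)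
      ((measurableSet_singleton (2:ℝ)).insert 1) (measurableSet_singleton 0)
      (measurableSet_singleton 1)]
    rw [mA0R, mT12R, mE0R, mB1R]
  -- second-interval conditional expectations
  have hJ1 : (∫ ω, DY2 ω ∂(μ[|{ω | DY1 ω = 0 ∧ A ω = 1}])) =
      (piA * (1 - q1) + piA * (ph + pim) * q1)⁻¹ * (piA * (pd + pr) * (1 - q1) * q2) := by
    rw [aux_cond_integral μ DY2 {ω | DY1 ω = 0 ∧ A ω = 1} (T ⁻¹' ({1, 3} : Set ℝ) ∩ B2 ⁻¹' {1}) ms21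
      (mT13.inter mB1) ?_, hs2m1, hnum21]
    intro ω hω
    obtain ⟨h0, hA⟩ := hω
    rcases hB2r ω with hB | hB <;> rcases hTr ω with hT | hT | hT | hT <;>
      norm_num [hDY2 ω, hE2 ω, h0, hA, hB, hT, Set.mem_preimage]
  have hJ0 : (∫ ω, DY2 ω ∂(μ[|{ω | DY1 ω = 0 ∧ A ω = 0}])) =
      ((1 - piA) * (1 - q1) + (1 - piA) * (pr + pim) * q1)⁻¹ *
        ((1 - piA) * (pd + ph) * (1 - q1) * q2) := by
    rw [aux_cond_integral μ DY2 {ω | DY1 ω = 0 ∧ A ω = 0} (T ⁻¹' ({1, 2} : Set ℝ) ∩ B2 ⁻¹' {1}) ms20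
      (mT12.inter mB1) ?_, hs2m0, hnum20]
    intro ω hω
    obtain ⟨h0, hA⟩ := hω
    rcases hB2r ω with hB | hB <;> rcases hTr ω with hT | hT | hT | hT <;>
      norm_num [hDY2 ω, hE2 ω, h0, hA, hB, hT, Set.mem_preimage]
  constructor
  · rw [hI1, hI0]
    field_simp
  · rw [hJ1, hJ0, hphpim, hprpim]
    have ha1 : (0:ℝ) < piA * (1 - q1) := mul_pos hpiApos (by linarith)
    have ha2 : (0:ℝ) < piA * (1 - (pd + pr)) * q1 :=
      mul_pos (mul_pos hpiApos (by linarith)) hq1pos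
    have hb1 : (0:ℝ) < (1 - piA) * (1 - q1) := mul_pos (by linarith) (by linarith)
    have hb2 : (0:ℝ) < (1 - piA) * (1 - (pd + ph)) * q1 :=
      mul_pos (mul_pos (by linarith) (by linarith)) hq1pos
    have hc1 : (0:ℝ) < (1 - (pd + pr)) * q1 := mul_pos (by linarith) hq1pos
    have hc2 : (0:ℝ) < (1 - (pd + ph)) * q1 := mul_pos (by linarith) hq1pos
    have hd1 : piA * (1 - q1) + piA * (1 - (pd + pr)) * q1 ≠ 0 := by linarith
    have hd0 : (1 - piA) * (1 - q1) + (1 - piA) * (1 - (pd + ph)) * q1 ≠ 0 := by linarith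
    have hr1 : (1 - (pd + pr)) * q1 + (1 - q1) ≠ 0 := by linarith
    have hr0 : (1 - (pd + ph)) * q1 + (1 - q1) ≠ 0 := by linarith
    field_simp
    ring
end

section
/- Hazard ratios are stable under the null only without a time-1 effect. In the explicit data-generating model, assume 0 < q1 < 1, 0 < q2, πA ∈ (0,1), pd + ph < 1, pd + pr < 1, pd + ph > 0 and pd + pr > 0. Then HR1 := E[ΔY1 | A = 1]/E[ΔY1 | A = 0] equals HR2 := E[ΔY2 | ΔY1 = 0, A = 1]/E[ΔY2 | ΔY1 = 0, A = 0] if and only if ph = pr, which holds if and only if P(ΔY1 = 0 | A = 1) = P(ΔY1 = 0 | A = 0); i.e., under the sharp null (which holds by construction of the model), the two hazard ratios coincide exactly when the vaccine has no population-level effect on interval-1 survival. -/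
open MeasureTheory ProbabilityTheory
open scoped ProbabilityTheory

section Aux
variable {Ω : Type*} [MeasurableSpace Ω]

lemma aux_integral_cond (μ : Measure Ω) [IsProbabilityMeasure μ]
    (s : Set Ω) (g : Ω → ℝ) (hg : Measurable g)
    (hr : ∀ ω, g ω = 0 ∨ g ω = 1) :
    ∫ ω, g ω ∂(μ[|s]) = (μ s).toReal⁻¹ * (μ (s ∩ {ω | g ω = 1})).toReal := by
  have hgind : (fun ω => g ω) = Set.indicator {ω | g ω = 1} (fun _ => (1:ℝ)) := by
    funext ω
    rcases hr ω with h | h <;> simp [Set.indicator_apply, h]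
  have hms : MeasurableSet {ω | g ω = 1} := hg (measurableSet_singleton 1)
  rw [ProbabilityTheory.cond, integral_smul_measure, hgind,
    integral_indicator_const _ hms, measureReal_restrict_apply hms]
  simp [measureReal_def, ENNReal.toReal_inv, Set.inter_comm, mul_comm]

lemma aux_compl (μ : Measure Ω) [IsProbabilityMeasure μ]
    (f : Ω → ℝ) (hf : Measurable f) (hr : ∀ ω, f ω = 0 ∨ f ω = 1) :
    (μ {ω | f ω = 0}).toReal = 1 - (μ {ω | f ω = 1}).toReal := by
  have hms : MeasurableSet {ω | f ω = 1} := hf (measurableSet_singleton 1)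
  have hset : {ω | f ω = 0} = {ω | f ω = 1}ᶜ := by
    ext ω; rcases hr ω with h | h <;> simp [h]
  rw [hset, measure_compl hms (measure_ne_top μ _),
    measure_univ, ENNReal.toReal_sub_of_le prob_le_one ENNReal.one_ne_top]
  simp

end Aux

set_option maxHeartbeats 1000000 in
/-- Hazard ratios are stable under the null only without a time-1 effect. -/
theorem hazard_ratios_stable_iff_no_time_one_effect
    {Ω : Type*} [MeasurableSpace Ω] (μ : Measure Ω) [IsProbabilityMeasure μ]
    (A T E1 B2 DY1 E2 DY2 : Ω → ℝ)
    (hAm : Measurable A) (hTm : Measurable T) (hE1m : Measurable E1) (hB2m : Measurable B2)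
    (piA pd ph pr pim q1 q2 : ℝ)
    -- mutual independence of A, T, E1, B2
    (hindep : iIndepFun
      ![A, T, E1, B2] μ)
    -- ranges
    (hAr : ∀ ω, A ω = 0 ∨ A ω = 1)
    (hTr : ∀ ω, T ω = 1 ∨ T ω = 2 ∨ T ω = 3 ∨ T ω = 4)
    (hE1r : ∀ ω, E1 ω = 0 ∨ E1 ω = 1)
    (hB2r : ∀ ω, B2 ω = 0 ∨ B2 ω = 1)
    -- marginal distributions
    (hA1 : (μ {ω | A ω = 1}).toReal = piA)
    (hT1 : (μ {ω | T ω = 1}).toReal = pd)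
    (hT2 : (μ {ω | T ω = 2}).toReal = ph)
    (hT3 : (μ {ω | T ω = 3}).toReal = pr)
    (hT4 : (μ {ω | T ω = 4}).toReal = pim)
    (hE11 : (μ {ω | E1 ω = 1}).toReal = q1)
    (hB21 : (μ {ω | B2 ω = 1}).toReal = q2)
    (hsumT : pd + ph + pr + pim = 1)
    -- structural equations
    (hDY1 : ∀ ω, DY1 ω = E1 ω *
      ((if T ω = 1 then 1 else 0) + (1 - A ω) * (if T ω = 2 then 1 else 0) +
        A ω * (if T ω = 3 then 1 else 0)))
    (hE2 : ∀ ω, E2 ω = (1 - DY1 ω) * B2 ω)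
    (hDY2 : ∀ ω, DY2 ω = E2 ω *
      ((if T ω = 1 then 1 else 0) + (1 - A ω) * (if T ω = 2 then 1 else 0) +
        A ω * (if T ω = 3 then 1 else 0)))
    -- parameter constraints
    (hq1pos : 0 < q1) (hq1lt : q1 < 1) (hq2pos : 0 < q2)
    (hpiApos : 0 < piA) (hpiAlt : piA < 1)
    (hphlt : pd + ph < 1) (hprlt : pd + pr < 1)
    (hphpos : 0 < pd + ph) (hprpos : 0 < pd + pr)
    :
    ((∫ ω, DY1 ω ∂(μ[|{ω | A ω = 1}])) / (∫ ω, DY1 ω ∂(μ[|{ω | A ω = 0}])) =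
        (∫ ω, DY2 ω ∂(μ[|{ω | DY1 ω = 0 ∧ A ω = 1}])) /
          (∫ ω, DY2 ω ∂(μ[|{ω | DY1 ω = 0 ∧ A ω = 0}])) ↔
      ph = pr) ∧
    (ph = pr ↔
      ((μ[|{ω | A ω = 1}]) {ω | DY1 ω = 0}).toReal =
        ((μ[|{ω | A ω = 0}]) {ω | DY1 ω = 0}).toReal) := by
  classical
  -- measurability
  have mInd : ∀ c : ℝ, Measurable (fun ω => if T ω = c then (1:ℝ) else 0) := by
    intro c
    exact Measurable.ite (hTm (measurableSet_singleton c)) measurable_const measurable_const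
  have mf : Measurable (fun ω => (if T ω = 1 then (1:ℝ) else 0) +
      (1 - A ω) * (if T ω = 2 then 1 else 0) + A ω * (if T ω = 3 then 1 else 0)) :=
    ((mInd 1).add ((measurable_const.sub hAm).mul (mInd 2))).add (hAm.mul (mInd 3))
  have mDY1 : Measurable DY1 := by
    rw [show DY1 = _ from funext hDY1]; exact hE1m.mul mf
  have mE2 : Measurable E2 := by
    rw [show E2 = _ from funext hE2]; exact (measurable_const.sub mDY1).mul hB2m
  have mDY2 : Measurable DY2 := by
    rw [show DY2 = _ from funext hDY2]; exact mE2.mul mf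
  -- ranges
  have rDY1 : ∀ ω, DY1 ω = 0 ∨ DY1 ω = 1 := by
    intro ω
    rcases hE1r ω with he | he <;> rcases hAr ω with ha | ha <;>
      rcases hTr ω with ht | ht | ht | ht <;> norm_num [hDY1 ω, he, ha, ht]
  have rDY2 : ∀ ω, DY2 ω = 0 ∨ DY2 ω = 1 := by
    intro ω
    rcases hE1r ω with he | he <;> rcases hAr ω with ha | ha <;> rcases hB2r ω with hb | hb <;>
      rcases hTr ω with ht | ht | ht | ht <;>
      norm_num [hDY2 ω, hE2 ω, hDY1 ω, he, ha, hb, ht]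
  -- independence product
  have hprod : ∀ (s0 s1 s2 s3 : Set ℝ), MeasurableSet s0 → MeasurableSet s1 →
      MeasurableSet s2 → MeasurableSet s3 →
      μ (A ⁻¹' s0 ∩ T ⁻¹' s1 ∩ E1 ⁻¹' s2 ∩ B2 ⁻¹' s3)
        = μ (A ⁻¹' s0) * μ (T ⁻¹' s1) * μ (E1 ⁻¹' s2) * μ (B2 ⁻¹' s3) := by
    intro s0 s1 s2 s3 h0 h1 h2 h3
    have H := hindep.measure_inter_preimage_eq_mul (S := Finset.univ)
      (sets := ![s0, s1, s2, s3]) (fun i _ => by fin_cases i <;> simpa)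
    have e1 : (⋂ i ∈ (Finset.univ : Finset (Fin 4)), ![A, T, E1, B2] i ⁻¹' ![s0, s1, s2, s3] i)
        = A ⁻¹' s0 ∩ T ⁻¹' s1 ∩ E1 ⁻¹' s2 ∩ B2 ⁻¹' s3 := by
      ext ω; simp [Fin.forall_fin_succ, and_assoc]
    rw [e1, Fin.prod_univ_four] at H
    simpa using H
  -- measurable sets
  have msA1 : MeasurableSet {ω | A ω = 1} := hAm (measurableSet_singleton 1)
  have msA0 : MeasurableSet {ω | A ω = 0} := hAm (measurableSet_singleton 0)
  have msS1 : MeasurableSet {ω | DY1 ω = 0 ∧ A ω = 1} :=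
    (mDY1 (measurableSet_singleton 0)).inter msA1
  have msS0 : MeasurableSet {ω | DY1 ω = 0 ∧ A ω = 0} :=
    (mDY1 (measurableSet_singleton 0)).inter msA0
  -- complements
  have hA0 : (μ {ω | A ω = 0}).toReal = 1 - piA := by
    rw [aux_compl μ A hAm hAr, hA1]
  -- triple and quadruple product formulas
  have mtrip : ∀ a t e : ℝ, MeasurableSet (A ⁻¹' {a} ∩ T ⁻¹' {t} ∩ E1 ⁻¹' {e}) :=
    fun a t e => ((hAm (measurableSet_singleton a)).inter
      (hTm (measurableSet_singleton t))).inter (hE1m (measurableSet_singleton e))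
  have mquad : ∀ a t e b : ℝ,
      MeasurableSet (A ⁻¹' {a} ∩ T ⁻¹' {t} ∩ E1 ⁻¹' {e} ∩ B2 ⁻¹' {b}) :=
    fun a t e b => (mtrip a t e).inter (hB2m (measurableSet_singleton b))
  have htrip : ∀ a t e : ℝ,
      (μ (A ⁻¹' {a} ∩ T ⁻¹' {t} ∩ E1 ⁻¹' {e})).toReal
        = (μ {ω | A ω = a}).toReal * (μ {ω | T ω = t}).toReal *
          (μ {ω | E1 ω = e}).toReal := by
    intro a t e
    have H := hprod {a} {t} {e} Set.univ (measurableSet_singleton a)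
      (measurableSet_singleton t) (measurableSet_singleton e) MeasurableSet.univ
    simp only [Set.preimage_univ, Set.inter_univ, measure_univ, mul_one] at H
    rw [H]
    simp only [ENNReal.toReal_mul]
    rfl
  have hquad : ∀ a t e b : ℝ,
      (μ (A ⁻¹' {a} ∩ T ⁻¹' {t} ∩ E1 ⁻¹' {e} ∩ B2 ⁻¹' {b})).toReal
        = (μ {ω | A ω = a}).toReal * (μ {ω | T ω = t}).toReal *
          (μ {ω | E1 ω = e}).toReal * (μ {ω | B2 ω = b}).toReal := by
    intro a t e b
    rw [hprod {a} {t} {e} {b} (measurableSet_singleton a) (measurableSet_singleton t)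
      (measurableSet_singleton e) (measurableSet_singleton b)]
    simp only [ENNReal.toReal_mul]
    rfl
  -- event: {A = a} ∩ {DY1 = 1}
  have hev1 : ∀ (a t' : ℝ), (a = 1 ∧ t' = 3) ∨ (a = 0 ∧ t' = 2) →
      {ω | A ω = a} ∩ {ω | DY1 ω = 1}
        = (A ⁻¹' {a} ∩ T ⁻¹' {1} ∩ E1 ⁻¹' {1}) ∪ (A ⁻¹' {a} ∩ T ⁻¹' {t'} ∩ E1 ⁻¹' {1}) := by
    rintro a t' (⟨rfl, rfl⟩ | ⟨rfl, rfl⟩) <;>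
    · ext ω
      rcases hAr ω with ha | ha <;> rcases hTr ω with ht | ht | ht | ht <;>
        rcases hE1r ω with he | he <;>
        norm_num [hDY1 ω, ha, ht, he]
  have hdisj1 : ∀ (a e t t' : ℝ), t ≠ t' →
      Disjoint (A ⁻¹' {a} ∩ T ⁻¹' {t} ∩ E1 ⁻¹' {e}) (A ⁻¹' {a} ∩ T ⁻¹' {t'} ∩ E1 ⁻¹' {e}) := by
    intro a e t t' hne
    rw [Set.disjoint_left]
    rintro ω ⟨⟨-, h1⟩, -⟩ ⟨⟨-, h2⟩, -⟩
    exact hne ((Set.mem_singleton_iff.mp h1).symm.trans (Set.mem_singleton_iff.mp h2))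
  have hdisj2 : ∀ (a e b t t' : ℝ), t ≠ t' →
      Disjoint (A ⁻¹' {a} ∩ T ⁻¹' {t} ∩ E1 ⁻¹' {e} ∩ B2 ⁻¹' {b})
        (A ⁻¹' {a} ∩ T ⁻¹' {t'} ∩ E1 ⁻¹' {e} ∩ B2 ⁻¹' {b}) := by
    intro a e b t t' hne
    exact Set.disjoint_of_subset Set.inter_subset_left Set.inter_subset_left
      (hdisj1 a e t t' hne)
  -- measure of {A = 1} ∩ {DY1 = 1} and {A = 0} ∩ {DY1 = 1}
  have hm11 : (μ ({ω | A ω = 1} ∩ {ω | DY1 ω = 1})).toReal = piA * pd * q1 + piA * pr * q1 := by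
    rw [hev1 1 3 (Or.inl ⟨rfl, rfl⟩),
      measure_union (hdisj1 1 1 1 3 (by norm_num)) (mtrip 1 3 1),
      ENNReal.toReal_add (measure_ne_top μ _) (measure_ne_top μ _), htrip, htrip,
      hA1, hT1, hT3, hE11]
  have hm01 : (μ ({ω | A ω = 0} ∩ {ω | DY1 ω = 1})).toReal
      = (1 - piA) * pd * q1 + (1 - piA) * ph * q1 := by
    rw [hev1 0 2 (Or.inr ⟨rfl, rfl⟩),
      measure_union (hdisj1 0 1 1 2 (by norm_num)) (mtrip 0 2 1),
      ENNReal.toReal_add (measure_ne_top μ _) (measure_ne_top μ _), htrip, htrip,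
      hA0, hT1, hT2, hE11]
  -- measure of {A = a} ∩ {DY1 = 0} via difference
  have hzeroiff : ∀ ω, DY1 ω = 0 ↔ ¬ DY1 ω = 1 := by
    intro ω; rcases rDY1 ω with h | h <;> norm_num [h]
  have hdiffset : ∀ s : Set Ω, s ∩ {ω | DY1 ω = 0} = s \ (s ∩ {ω | DY1 ω = 1}) := by
    intro s; ext ω
    simp only [Set.mem_inter_iff, Set.mem_setOf_eq, Set.mem_diff, hzeroiff ω]
    tauto
  have hmdiff : ∀ s : Set Ω, MeasurableSet s →
      (μ (s ∩ {ω | DY1 ω = 0})).toReal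
        = (μ s).toReal - (μ (s ∩ {ω | DY1 ω = 1})).toReal := by
    intro s hs
    rw [hdiffset s, measure_diff Set.inter_subset_left
      ((hs.inter (show MeasurableSet {ω | DY1 ω = 1} from mDY1 (measurableSet_singleton 1))).nullMeasurableSet) (measure_ne_top μ _),
      ENNReal.toReal_sub_of_le (measure_mono Set.inter_subset_left) (measure_ne_top μ _)]
  have hm10 : (μ ({ω | A ω = 1} ∩ {ω | DY1 ω = 0})).toReal
      = piA * (1 - q1 * (pd + pr)) := by
    rw [hmdiff _ msA1, hm11, hA1]; ring
  have hm00 : (μ ({ω | A ω = 0} ∩ {ω | DY1 ω = 0})).toReal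
      = (1 - piA) * (1 - q1 * (pd + ph)) := by
    rw [hmdiff _ msA0, hm01, hA0]; ring
  -- the conditioning sets for interval 2
  have hs1eq : {ω | DY1 ω = 0 ∧ A ω = 1} = {ω | A ω = 1} ∩ {ω | DY1 ω = 0} := by
    ext ω; simp [and_comm]
  have hs0eq : {ω | DY1 ω = 0 ∧ A ω = 0} = {ω | A ω = 0} ∩ {ω | DY1 ω = 0} := by
    ext ω; simp [and_comm]
  -- event: {DY1 = 0 ∧ A = a} ∩ {DY2 = 1}
  have hev2 : ∀ (a t' : ℝ), (a = 1 ∧ t' = 3) ∨ (a = 0 ∧ t' = 2) →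
      {ω | DY1 ω = 0 ∧ A ω = a} ∩ {ω | DY2 ω = 1}
        = (A ⁻¹' {a} ∩ T ⁻¹' {1} ∩ E1 ⁻¹' {0} ∩ B2 ⁻¹' {1})
          ∪ (A ⁻¹' {a} ∩ T ⁻¹' {t'} ∩ E1 ⁻¹' {0} ∩ B2 ⁻¹' {1}) := by
    rintro a t' (⟨rfl, rfl⟩ | ⟨rfl, rfl⟩) <;>
    · ext ω
      rcases hAr ω with ha | ha <;> rcases hTr ω with ht | ht | ht | ht <;>
        rcases hE1r ω with he | he <;> rcases hB2r ω with hb | hb <;>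
        norm_num [hDY2 ω, hE2 ω, hDY1 ω, ha, ht, he, hb]
  have hE10 : (μ {ω | E1 ω = 0}).toReal = 1 - q1 := by
    rw [aux_compl μ E1 hE1m hE1r, hE11]
  have hm21 : (μ ({ω | DY1 ω = 0 ∧ A ω = 1} ∩ {ω | DY2 ω = 1})).toReal
      = piA * pd * (1 - q1) * q2 + piA * pr * (1 - q1) * q2 := by
    rw [hev2 1 3 (Or.inl ⟨rfl, rfl⟩),
      measure_union (hdisj2 1 0 1 1 3 (by norm_num)) (mquad 1 3 0 1),
      ENNReal.toReal_add (measure_ne_top μ _) (measure_ne_top μ _), hquad, hquad,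
      hA1, hT1, hT3, hE10, hB21]
  have hm20 : (μ ({ω | DY1 ω = 0 ∧ A ω = 0} ∩ {ω | DY2 ω = 1})).toReal
      = (1 - piA) * pd * (1 - q1) * q2 + (1 - piA) * ph * (1 - q1) * q2 := by
    rw [hev2 0 2 (Or.inr ⟨rfl, rfl⟩),
      measure_union (hdisj2 0 0 1 1 2 (by norm_num)) (mquad 0 2 0 1),
      ENNReal.toReal_add (measure_ne_top μ _) (measure_ne_top μ _), hquad, hquad,
      hA0, hT1, hT2, hE10, hB21]
  -- nonzero facts
  have hpiAne : piA ≠ 0 := ne_of_gt hpiApos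
  have hpiA1ne : (1 : ℝ) - piA ≠ 0 := by linarith
  have hq1ne : q1 ≠ 0 := ne_of_gt hq1pos
  have h1q1 : (0:ℝ) < 1 - q1 := by linarith
  have hxpos : (0:ℝ) < 1 - q1 * (pd + pr) := by
    have := mul_lt_mul_of_pos_right hq1lt hprpos
    linarith
  have hypos : (0:ℝ) < 1 - q1 * (pd + ph) := by
    have := mul_lt_mul_of_pos_right hq1lt hphpos
    linarith
  -- interval-1 integrals
  have I11 : ∫ ω, DY1 ω ∂(μ[|{ω | A ω = 1}]) = q1 * (pd + pr) := by
    rw [aux_integral_cond μ _ DY1 mDY1 rDY1, hm11, hA1]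
    field_simp
  have I10 : ∫ ω, DY1 ω ∂(μ[|{ω | A ω = 0}]) = q1 * (pd + ph) := by
    rw [aux_integral_cond μ _ DY1 mDY1 rDY1, hm01, hA0]
    field_simp
  -- interval-2 integrals
  have I21 : ∫ ω, DY2 ω ∂(μ[|{ω | DY1 ω = 0 ∧ A ω = 1}])
      = (1 - q1) * q2 * (pd + pr) / (1 - q1 * (pd + pr)) := by
    rw [aux_integral_cond μ _ DY2 mDY2 rDY2, hm21]
    rw [show (μ {ω | DY1 ω = 0 ∧ A ω = 1}).toReal = piA * (1 - q1 * (pd + pr)) by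
      rw [hs1eq]; exact hm10]
    field_simp
  have I20 : ∫ ω, DY2 ω ∂(μ[|{ω | DY1 ω = 0 ∧ A ω = 0}])
      = (1 - q1) * q2 * (pd + ph) / (1 - q1 * (pd + ph)) := by
    rw [aux_integral_cond μ _ DY2 mDY2 rDY2, hm20]
    rw [show (μ {ω | DY1 ω = 0 ∧ A ω = 0}).toReal = (1 - piA) * (1 - q1 * (pd + ph)) by
      rw [hs0eq]; exact hm00]
    field_simp
  -- conditional survival probabilities
  have K1 : ((μ[|{ω | A ω = 1}]) {ω | DY1 ω = 0}).toReal = 1 - q1 * (pd + pr) := by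
    rw [cond_apply msA1 μ {ω | DY1 ω = 0}, ENNReal.toReal_mul, ENNReal.toReal_inv, hm10, hA1]
    field_simp
  have K0 : ((μ[|{ω | A ω = 0}]) {ω | DY1 ω = 0}).toReal = 1 - q1 * (pd + ph) := by
    rw [cond_apply msA0 μ {ω | DY1 ω = 0}, ENNReal.toReal_mul, ENNReal.toReal_inv, hm00, hA0]
    field_simp
  rw [I11, I10, I21, I20, K1, K0]
  constructor
  · constructor
    · intro h
      rw [div_eq_div_iff (by positivity) (by positivity)] at h
      have hC : q1 * q1 * (1 - q1) * q2 * (pd + pr) * (pd + ph) * ((pd + pr) - (pd + ph)) = 0 := by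
        field_simp at h
        linear_combination (-(q1 * (1 - q1) * q2 * (pd + pr) * (pd + ph))) * h
      have h0 : ((pd + pr) - (pd + ph)) = 0 := by
        have hCne : q1 * q1 * (1 - q1) * q2 * (pd + pr) * (pd + ph) ≠ 0 := by positivity
        exact (mul_eq_zero.mp hC).resolve_left hCne
      linarith
    · rintro rfl
      rw [div_self (by positivity : q1 * (pd + ph) ≠ 0),
        div_self (by positivity : (1 - q1) * q2 * (pd + ph) / (1 - q1 * (pd + ph)) ≠ 0)]
  · constructor
    · rintro rfl
      rfl
    · intro h
      have : q1 * (pd + pr) = q1 * (pd + ph) := by linarith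
      have := mul_left_cancel₀ hq1ne this
      linarith
end

section
/- Conditional invariant incidence ratios. Let L be a random variable into a countable measurable space, and let l be a value with P(L = l) > 0. Suppose that, under the conditional probability measure P(· | L = l), the hypotheses of Proposition 1 hold: Consistency, Exposure necessity, Exclusion restriction, Blinding, Treatment exchangeability, Positivity, Exposure exchangeability, the sharp null hypothesis of no waning, and the nondegeneracy conditions E[ΔY1 | A=0, L=l] > 0, E[ΔY2 | A=0, L=l] > 0, P(E1[0]=1 | L=l) > 0 and E[Y1[0,1] | L=l] > 0. Then the conditional incidence ratios are equal: E[ΔY1 | A=1, L=l]/E[ΔY1 | A=0, L=l] = E[ΔY2 | A=1, L=l]/E[ΔY2 | A=0, L=l]. -/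
open MeasureTheory ProbabilityTheory
open scoped ProbabilityTheory

namespace IIRHelper

variable {Ω : Type*} [MeasurableSpace Ω] {μ : Measure Ω}

lemma integral_cond_eq (s : Set Ω) (f : Ω → ℝ) :
    ∫ ω, f ω ∂(μ[|s]) = (μ s).toReal⁻¹ * ∫ ω in s, f ω ∂μ := by
  rw [ProbabilityTheory.cond, integral_smul_measure, ENNReal.toReal_inv, smul_eq_mul]

/-- expectation over the event `{X = a}` of a variable independent of `X`. -/
lemma setIntegral_of_indep [IsProbabilityMeasure μ] {X G : Ω → ℝ}
    (hInd : IndepFun X G μ) (hXm : Measurable X) (hGm : AEStronglyMeasurable G μ) (a : ℝ) :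
    ∫ ω in {ω | X ω = a}, G ω ∂μ = (μ {ω | X ω = a}).toReal * ∫ ω, G ω ∂μ := by
  have hφ : Measurable (Set.indicator ({a} : Set ℝ) (fun _ => (1:ℝ))) :=
    measurable_const.indicator (measurableSet_singleton a)
  have hInd2 : IndepFun (fun ω => Set.indicator ({a} : Set ℝ) (fun _ => (1:ℝ)) (X ω)) G μ :=
    hInd.comp hφ measurable_id
  have hs : MeasurableSet {ω | X ω = a} := hXm (measurableSet_singleton a)
  have heq : (fun ω => Set.indicator ({a} : Set ℝ) (fun _ => (1:ℝ)) (X ω) * G ω)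
      = Set.indicator {ω | X ω = a} G := by
    funext ω
    by_cases h : X ω = a <;> simp [Set.indicator, h]
  have h1 : ∫ ω, Set.indicator ({a} : Set ℝ) (fun _ => (1:ℝ)) (X ω) ∂μ
      = (μ {ω | X ω = a}).toReal := by
    have h2 : (fun ω => Set.indicator ({a} : Set ℝ) (fun _ => (1:ℝ)) (X ω))
        = Set.indicator {ω | X ω = a} (fun _ => (1:ℝ)) := by
      funext ω; by_cases h : X ω = a <;> simp [Set.indicator, h]
    rw [h2, integral_indicator hs]
    simp
    rfl
  calc ∫ ω in {ω | X ω = a}, G ω ∂μ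
      = ∫ ω, Set.indicator {ω | X ω = a} G ω ∂μ := (integral_indicator hs).symm
    _ = ∫ ω, Set.indicator ({a} : Set ℝ) (fun _ => (1:ℝ)) (X ω) * G ω ∂μ := by rw [heq]
    _ = (μ {ω | X ω = a}).toReal * ∫ ω, G ω ∂μ := by
        rw [hInd2.integral_fun_mul_eq_mul_integral ((hφ.comp hXm).aestronglyMeasurable) hGm, h1]

/-- integral over a cond. measure of a variable independent of the conditioning event -/
lemma integral_cond_of_indep [IsProbabilityMeasure μ] {X G : Ω → ℝ}
    (hInd : IndepFun X G μ) (hXm : Measurable X) (hGm : AEStronglyMeasurable G μ) (a : ℝ)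
    (hne : μ {ω | X ω = a} ≠ 0) :
    ∫ ω, G ω ∂(μ[|{ω | X ω = a}]) = ∫ ω, G ω ∂μ := by
  rw [integral_cond_eq, setIntegral_of_indep hInd hXm hGm a, ← mul_assoc,
    inv_mul_cancel₀ (ENNReal.toReal_ne_zero.2 ⟨hne, measure_ne_top μ _⟩), one_mul]

end IIRHelper

open IIRHelper

/-- Conditional invariant incidence ratios: Proposition 1 under `P(· | L = l)`. -/
theorem conditional_invariant_incidence_ratios
    {Ω : Type*} [MeasurableSpace Ω] (P : Measure Ω) [IsProbabilityMeasure P]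
    {α : Type*} [MeasurableSpace α] [MeasurableSingletonClass α] [Countable α]
    (L : Ω → α) (hLm : Measurable L) (l : α)
    (hl : 0 < (P {ω | L ω = l}).toReal)
    -- the conditional measure given `L = l`, under which all hypotheses below are imposed
    (μ : Measure Ω) (hcond : μ = P[|{ω | L ω = l}])
    (A E1 E2 DY1 DY2 : Ω → ℝ)
    (E1p : ℝ → Ω → ℝ) (E2p Y1p Y2p Wp : ℝ → ℝ → Ω → ℝ)
    (hAm : Measurable A) (hE1m : Measurable E1) (hE2m : Measurable E2)
    (hDY1m : Measurable DY1) (hDY2m : Measurable DY2)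
    (hE1pm : ∀ a ∈ ({0, 1} : Set ℝ), Measurable (E1p a))
    (hE2pm : ∀ a ∈ ({0, 1} : Set ℝ), ∀ e1 ∈ ({0, 1} : Set ℝ), Measurable (E2p a e1))
    (hY1pm : ∀ a ∈ ({0, 1} : Set ℝ), ∀ e1 ∈ ({0, 1} : Set ℝ), Measurable (Y1p a e1))
    (hY2pm : ∀ a ∈ ({0, 1} : Set ℝ), ∀ e2 ∈ ({0, 1} : Set ℝ), Measurable (Y2p a e2))
    (hWpm : ∀ a ∈ ({0, 1} : Set ℝ), ∀ e1 ∈ ({0, 1} : Set ℝ), Measurable (Wp a e1))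
    (hAr : ∀ ω, A ω = 0 ∨ A ω = 1) (hE1r : ∀ ω, E1 ω = 0 ∨ E1 ω = 1)
    (hE2r : ∀ ω, E2 ω = 0 ∨ E2 ω = 1)
    (hDY1r : ∀ ω, DY1 ω = 0 ∨ DY1 ω = 1) (hDY2r : ∀ ω, DY2 ω = 0 ∨ DY2 ω = 1)
    (hE1pr : ∀ a ∈ ({0, 1} : Set ℝ), ∀ ω, E1p a ω = 0 ∨ E1p a ω = 1)
    (hE2pr : ∀ a ∈ ({0, 1} : Set ℝ), ∀ e1 ∈ ({0, 1} : Set ℝ), ∀ ω,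
      E2p a e1 ω = 0 ∨ E2p a e1 ω = 1)
    (hY1pr : ∀ a ∈ ({0, 1} : Set ℝ), ∀ e1 ∈ ({0, 1} : Set ℝ), ∀ ω,
      Y1p a e1 ω = 0 ∨ Y1p a e1 ω = 1)
    (hY2pr : ∀ a ∈ ({0, 1} : Set ℝ), ∀ e2 ∈ ({0, 1} : Set ℝ), ∀ ω,
      Y2p a e2 ω = 0 ∨ Y2p a e2 ω = 1)
    (hWpr : ∀ a ∈ ({0, 1} : Set ℝ), ∀ e1 ∈ ({0, 1} : Set ℝ), ∀ ω,
      Wp a e1 ω = 0 ∨ Wp a e1 ω = 1)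
    (hmono : ∀ ω, DY1 ω = 1 → DY2 ω = 0)
    -- Consistency
    (hconsE1 : ∀ a ∈ ({0, 1} : Set ℝ), ∀ᵐ ω ∂μ, A ω = a → E1 ω = E1p a ω)
    (hconsY1 : ∀ a ∈ ({0, 1} : Set ℝ), ∀ e1 ∈ ({0, 1} : Set ℝ),
      ∀ᵐ ω ∂μ, A ω = a → E1 ω = e1 → DY1 ω = Y1p a e1 ω)
    (hconsE2 : ∀ a ∈ ({0, 1} : Set ℝ), ∀ e1 ∈ ({0, 1} : Set ℝ),
      ∀ᵐ ω ∂μ, A ω = a → E1 ω = e1 → E2 ω = E2p a e1 ω)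
    (hconsY2 : ∀ a ∈ ({0, 1} : Set ℝ), ∀ e2 ∈ ({0, 1} : Set ℝ),
      ∀ᵐ ω ∂μ, A ω = a → E1 ω = 0 → E2 ω = e2 → DY2 ω = Y2p a e2 ω)
    (hconsW : ∀ a ∈ ({0, 1} : Set ℝ), ∀ e1 ∈ ({0, 1} : Set ℝ),
      ∀ᵐ ω ∂μ, A ω = a → E1 ω = e1 → DY1 ω = 0 → E2 ω = 1 → DY2 ω = Wp a e1 ω)
    -- Exposure necessity
    (hnecY1 : ∀ a ∈ ({0, 1} : Set ℝ), ∀ᵐ ω ∂μ, Y1p a 0 ω = 0)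
    (hnecY2 : ∀ a ∈ ({0, 1} : Set ℝ), ∀ᵐ ω ∂μ, Y2p a 0 ω = 0)
    (hnecE2 : ∀ᵐ ω ∂μ, E2 ω = 0 → DY2 ω = 0)
    -- Exclusion restriction
    (hexcl : ∀ a ∈ ({0, 1} : Set ℝ), ∀ᵐ ω ∂μ, Wp a 1 ω = Y2p a 1 ω ∧ Wp a 0 ω = Y2p a 1 ω)
    -- Blinding
    (hblind1 : ∀ᵐ ω ∂μ, E1p 0 ω = E1p 1 ω)
    (hblind2 : ∀ᵐ ω ∂μ, E2p 0 0 ω = E2p 1 0 ω)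
    -- Treatment exchangeability
    (hexch : IndepFun A (fun ω => ![E1p 0 ω, E1p 1 ω,
      E2p 0 0 ω, E2p 0 1 ω, E2p 1 0 ω, E2p 1 1 ω,
      Y1p 0 0 ω, Y1p 0 1 ω, Y1p 1 0 ω, Y1p 1 1 ω,
      Y2p 0 0 ω, Y2p 0 1 ω, Y2p 1 0 ω, Y2p 1 1 ω,
      Wp 0 0 ω, Wp 0 1 ω, Wp 1 0 ω, Wp 1 1 ω]) μ)
    -- Positivity
    (hpos : 0 < (μ {ω | A ω = 1}).toReal ∧ (μ {ω | A ω = 1}).toReal < 1)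
    -- Exposure exchangeability
    (heeY1 : ∀ a ∈ ({0, 1} : Set ℝ), ∀ e1 ∈ ({0, 1} : Set ℝ), IndepFun (E1p a) (Y1p a e1) μ)
    (heeY2cond : ∀ a ∈ ({0, 1} : Set ℝ), ∀ e2 ∈ ({0, 1} : Set ℝ), ∀ e ∈ ({0, 1} : Set ℝ),
      IndepFun (E1p a) (Y2p a e2) (μ[|{ω | E2p a 0 ω = e}]))
    (heeE2 : ∀ a ∈ ({0, 1} : Set ℝ), ∀ e2 ∈ ({0, 1} : Set ℝ), IndepFun (E2p a 0) (Y2p a e2) μ)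
    -- Sharp null hypothesis of no waning
    (hnull : ∀ a ∈ ({0, 1} : Set ℝ), ∀ᵐ ω ∂μ, Y1p a 1 ω = Y2p a 1 ω)
    -- Nondegeneracy (conditional on L = l)
    (hd1 : 0 < ∫ ω, DY1 ω ∂(μ[|{ω | A ω = 0}]))
    (hd2 : 0 < ∫ ω, DY2 ω ∂(μ[|{ω | A ω = 0}]))
    (hd3 : 0 < (μ {ω | E1p 0 ω = 1}).toReal)
    (hd4 : 0 < ∫ ω, Y1p 0 1 ω ∂μ) :
    (∫ ω, DY1 ω ∂(μ[|{ω | A ω = 1}])) / (∫ ω, DY1 ω ∂(μ[|{ω | A ω = 0}])) =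
      (∫ ω, DY2 ω ∂(μ[|{ω | A ω = 1}])) / (∫ ω, DY2 ω ∂(μ[|{ω | A ω = 0}])) := by
  classical
  have mem0 : (0:ℝ) ∈ ({0, 1} : Set ℝ) := by norm_num
  have mem1 : (1:ℝ) ∈ ({0, 1} : Set ℝ) := by norm_num
  -- μ is a probability measure
  have hPl : P {ω | L ω = l} ≠ 0 := by
    intro h; rw [h] at hl; simp at hl
  have hμprob : IsProbabilityMeasure μ := by
    rw [hcond]; exact cond_isProbabilityMeasure hPl
  -- both treatment groups have positive probability
  have hA1ne : μ {ω | A ω = 1} ≠ 0 := by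
    intro h; rw [h] at hpos; simp at hpos
  have hA0ne : μ {ω | A ω = 0} ≠ 0 := by
    intro h0
    have hs1lt : μ {ω | A ω = 1} < 1 := by
      rcases lt_or_ge (μ {ω | A ω = 1}) 1 with h | h
      · exact h
      · have h1 : μ {ω | A ω = 1} = 1 := le_antisymm prob_le_one h
        rw [h1] at hpos; norm_num at hpos
    have hcover : (Set.univ : Set Ω) ⊆ {ω | A ω = 0} ∪ {ω | A ω = 1} := by
      intro ω _; exact hAr ω
    have h1 : (1 : ENNReal) ≤ μ ({ω | A ω = 0} ∪ {ω | A ω = 1}) := by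
      rw [← measure_univ (μ := μ)]; exact measure_mono hcover
    have h2 : μ ({ω | A ω = 0} ∪ {ω | A ω = 1}) ≤ μ {ω | A ω = 0} + μ {ω | A ω = 1} :=
      measure_union_le _ _
    rw [h0, zero_add] at h2
    exact absurd (h1.trans h2) (not_le.2 hs1lt)
  -- measurabilities
  have hE1p0m := hE1pm 0 mem0
  have hE1p1m := hE1pm 1 mem1
  have hE2p00m := hE2pm 0 mem0 0 mem0
  have hE2p10m := hE2pm 1 mem1 0 mem0
  have hY1p01m := hY1pm 0 mem0 1 mem1
  have hY1p11m := hY1pm 1 mem1 1 mem1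
  have hY2p01m := hY2pm 0 mem0 1 mem1
  have hY2p11m := hY2pm 1 mem1 1 mem1
  -- treatment independence from the big vector
  have hgen : ∀ g : (Fin 18 → ℝ) → ℝ, Measurable g →
      IndepFun A (fun ω => g (![E1p 0 ω, E1p 1 ω,
        E2p 0 0 ω, E2p 0 1 ω, E2p 1 0 ω, E2p 1 1 ω,
        Y1p 0 0 ω, Y1p 0 1 ω, Y1p 1 0 ω, Y1p 1 1 ω,
        Y2p 0 0 ω, Y2p 0 1 ω, Y2p 1 0 ω, Y2p 1 1 ω,
        Wp 0 0 ω, Wp 0 1 ω, Wp 1 0 ω, Wp 1 1 ω])) μ :=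
    fun g hg => hexch.comp measurable_id hg
  have hiA1 : ∀ a ∈ ({0,1} : Set ℝ), IndepFun A (fun ω => E1p a ω * Y1p a 1 ω) μ := by
    intro a ha
    obtain rfl | rfl := ha
    · exact hgen (fun v => v 0 * v 7) ((measurable_pi_apply 0).mul (measurable_pi_apply 7))
    · exact hgen (fun v => v 1 * v 9) ((measurable_pi_apply 1).mul (measurable_pi_apply 9))
  have hiA2 : ∀ a ∈ ({0,1} : Set ℝ),
      IndepFun A (fun ω => (1 - E1p a ω) * (E2p a 0 ω * Y2p a 1 ω)) μ := by
    intro a ha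
    obtain rfl | rfl := ha
    · exact hgen (fun v => (1 - v 0) * (v 2 * v 11))
        ((measurable_const.sub (measurable_pi_apply 0)).mul
          ((measurable_pi_apply 2).mul (measurable_pi_apply 11)))
    · exact hgen (fun v => (1 - v 1) * (v 4 * v 13))
        ((measurable_const.sub (measurable_pi_apply 1)).mul
          ((measurable_pi_apply 4).mul (measurable_pi_apply 13)))
  have hAane : ∀ a ∈ ({0,1} : Set ℝ), μ {ω | A ω = a} ≠ 0 := by
    intro a ha; obtain rfl | rfl := ha
    · exact hA0ne
    · exact hA1ne
  -- abbreviations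
  set x : ℝ → ℝ := fun a => ∫ ω, Y1p a 1 ω ∂μ with hx
  set p1 : ℝ := ∫ ω, E1p 0 ω ∂μ with hp1
  -- Key claim 1 : E[ΔY1 | A = a] = p1 * x a
  have key1 : ∀ a ∈ ({0,1} : Set ℝ),
      (∫ ω, DY1 ω ∂(μ[|{ω | A ω = a}])) = p1 * x a := by
    intro a ha
    have hY1am := hY1pm a ha 1 mem1
    have hE1am := hE1pm a ha
    have hae1 : ∀ᵐ ω ∂μ, A ω = a → DY1 ω = E1p a ω * Y1p a 1 ω := by
      filter_upwards [hconsE1 a ha, hconsY1 a ha 0 mem0, hconsY1 a ha 1 mem1, hnecY1 a ha]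
        with ω h1 h2 h3 h4 hA
      rcases hE1r ω with hE | hE
      · rw [h2 hA hE, h4, ← h1 hA, hE, zero_mul]
      · rw [h3 hA hE, ← h1 hA, hE, one_mul]
    have hsa : MeasurableSet {ω | A ω = a} := hAm (measurableSet_singleton a)
    have htoRne : (μ {ω | A ω = a}).toReal ≠ 0 :=
      ENNReal.toReal_ne_zero.2 ⟨hAane a ha, measure_ne_top μ _⟩
    have e1 : ∫ ω in {ω | A ω = a}, DY1 ω ∂μ
        = ∫ ω in {ω | A ω = a}, E1p a ω * Y1p a 1 ω ∂μ :=
      setIntegral_congr_ae hsa (hae1.mono fun ω h hω => h hω)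
    rw [integral_cond_eq, e1,
      setIntegral_of_indep (hiA1 a ha) hAm ((hE1am.mul hY1am).aestronglyMeasurable) a,
      ← mul_assoc, inv_mul_cancel₀ htoRne, one_mul,
      (heeY1 a ha 1 mem1).integral_fun_mul_eq_mul_integral hE1am.aestronglyMeasurable hY1am.aestronglyMeasurable]
    congr 1
    obtain rfl | rfl := ha
    · rfl
    · exact (integral_congr_ae hblind1).symm
  -- Key claim 2 (first step): E[ΔY2 | A = a] as a set integral over T a
  have key2 : ∀ a ∈ ({0,1} : Set ℝ),
      (∫ ω, DY2 ω ∂(μ[|{ω | A ω = a}]))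
        = ∫ ω in {ω | E2p a 0 ω = 1}, (1 - E1p a ω) * Y2p a 1 ω ∂μ := by
    intro a ha
    have hY2am := hY2pm a ha 1 mem1
    have hE1am := hE1pm a ha
    have hE2am := hE2pm a ha 0 mem0
    have hae2 : ∀ᵐ ω ∂μ, A ω = a → DY2 ω = (1 - E1p a ω) * (E2p a 0 ω * Y2p a 1 ω) := by
      filter_upwards [hconsE1 a ha, hconsY1 a ha 1 mem1, hconsE2 a ha 0 mem0,
        hconsY2 a ha 1 mem1, hconsW a ha 1 mem1, hexcl a ha, hnull a ha, hnecE2]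
        with ω hE1c hY1c hE2c hY2c hWc hex hnl hnec hA
      rcases hE1r ω with hE | hE
      · have hE1p0 : E1p a ω = 0 := by rw [← hE1c hA, hE]
        rcases hE2r ω with hE2 | hE2
        · have h0 : E2p a 0 ω = 0 := by rw [← hE2c hA hE, hE2]
          rw [hnec hE2, hE1p0, h0]; ring
        · have h1 : E2p a 0 ω = 1 := by rw [← hE2c hA hE, hE2]
          rw [hY2c hA hE hE2, hE1p0, h1]; ring
      · have hE1p1 : E1p a ω = 1 := by rw [← hE1c hA, hE]
        have hz : DY2 ω = 0 := by
          rcases hDY1r ω with hD | hD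
          · have hY : Y1p a 1 ω = 0 := by rw [← hY1c hA hE, hD]
            rcases hE2r ω with hE2 | hE2
            · exact hnec hE2
            · rw [hWc hA hE hD hE2, hex.1, ← hnl, hY]
          · exact hmono ω hD
        rw [hz, hE1p1]; ring
    have hsa : MeasurableSet {ω | A ω = a} := hAm (measurableSet_singleton a)
    have hsT : MeasurableSet {ω | E2p a 0 ω = 1} := hE2am (measurableSet_singleton 1)
    have htoRne : (μ {ω | A ω = a}).toReal ≠ 0 :=
      ENNReal.toReal_ne_zero.2 ⟨hAane a ha, measure_ne_top μ _⟩
    have e1 : ∫ ω in {ω | A ω = a}, DY2 ω ∂μ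
        = ∫ ω in {ω | A ω = a}, (1 - E1p a ω) * (E2p a 0 ω * Y2p a 1 ω) ∂μ :=
      setIntegral_congr_ae hsa (hae2.mono fun ω h hω => h hω)
    have hGm : Measurable (fun ω => (1 - E1p a ω) * (E2p a 0 ω * Y2p a 1 ω)) :=
      (measurable_const.sub hE1am).mul (hE2am.mul hY2am)
    have e2 : (fun ω => (1 - E1p a ω) * (E2p a 0 ω * Y2p a 1 ω))
        = Set.indicator {ω | E2p a 0 ω = 1} (fun ω => (1 - E1p a ω) * Y2p a 1 ω) := by
      funext ω
      rcases hE2pr a ha 0 mem0 ω with h | h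
      · have : ω ∉ {ω | E2p a 0 ω = 1} := by simp [Set.mem_setOf_eq, h]
        simp [Set.indicator_of_notMem this, h]
      · have : ω ∈ {ω | E2p a 0 ω = 1} := h
        simp [Set.indicator_of_mem this, h]
    rw [integral_cond_eq, e1,
      setIntegral_of_indep (hiA2 a ha) hAm hGm.aestronglyMeasurable a,
      ← mul_assoc, inv_mul_cancel₀ htoRne, one_mul, e2, integral_indicator hsT]
  -- positivity of μ T0
  have hsT0 : MeasurableSet {ω | E2p 0 0 ω = 1} := hE2p00m (measurableSet_singleton 1)
  have hT0ne : μ {ω | E2p 0 0 ω = 1} ≠ 0 := by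
    intro h0
    have := key2 0 mem0
    rw [this] at hd2
    rw [Measure.restrict_eq_zero.2 h0] at hd2
    simp at hd2
  -- the two conditioning events coincide a.e.
  have hTae : {ω | E2p 1 0 ω = 1} =ᵐ[μ] {ω | E2p 0 0 ω = 1} := by
    filter_upwards [hblind2] with ω h
    change (E2p 1 0 ω = 1) = (E2p 0 0 ω = 1)
    rw [h]
  have hT1eq : μ {ω | E2p 1 0 ω = 1} = μ {ω | E2p 0 0 ω = 1} := measure_congr hTae
  have hcondeq : (μ[|{ω | E2p 1 0 ω = 1}]) = (μ[|{ω | E2p 0 0 ω = 1}]) := by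
    rw [ProbabilityTheory.cond, ProbabilityTheory.cond, hT1eq,
      Measure.restrict_congr_set hTae]
  set q : ℝ := ∫ ω, (1 - E1p 0 ω) ∂(μ[|{ω | E2p 0 0 ω = 1}]) with hq
  set m : ℝ := (μ {ω | E2p 0 0 ω = 1}).toReal with hm
  -- Key claim 3 : the set integral factors as m * q * (x a)
  have key3 : ∀ a ∈ ({0,1} : Set ℝ),
      (∫ ω in {ω | E2p a 0 ω = 1}, (1 - E1p a ω) * Y2p a 1 ω ∂μ) = m * q * x a := by
    intro a ha
    have hY2am := hY2pm a ha 1 mem1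
    have hE1am := hE1pm a ha
    have hE2am := hE2pm a ha 0 mem0
    have hTane : μ {ω | E2p a 0 ω = 1} ≠ 0 := by
      obtain rfl | rfl := ha
      · exact hT0ne
      · rw [hT1eq]; exact hT0ne
    have htoRne : (μ {ω | E2p a 0 ω = 1}).toReal ≠ 0 :=
      ENNReal.toReal_ne_zero.2 ⟨hTane, measure_ne_top μ _⟩
    -- conditional independence of (1 - E1p a) and Y2p a 1 given T a
    have hci : IndepFun (fun ω => 1 - E1p a ω) (Y2p a 1) (μ[|{ω | E2p a 0 ω = 1}]) :=
      (heeY2cond a ha 1 mem1 1 mem1).comp (measurable_const.sub measurable_id) measurable_id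
    -- from set integral to conditional integral
    have e1 : ∫ ω in {ω | E2p a 0 ω = 1}, (1 - E1p a ω) * Y2p a 1 ω ∂μ
        = (μ {ω | E2p a 0 ω = 1}).toReal
          * ∫ ω, (1 - E1p a ω) * Y2p a 1 ω ∂(μ[|{ω | E2p a 0 ω = 1}]) := by
      rw [integral_cond_eq, ← mul_assoc, mul_inv_cancel₀ htoRne, one_mul]
    rw [e1, hci.integral_fun_mul_eq_mul_integral ((measurable_const.sub hE1am).aestronglyMeasurable)
      hY2am.aestronglyMeasurable]
    -- the conditional mean of Y2p a 1 equals its unconditional mean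
    have e2 : ∫ ω, Y2p a 1 ω ∂(μ[|{ω | E2p a 0 ω = 1}]) = ∫ ω, Y2p a 1 ω ∂μ :=
      integral_cond_of_indep (heeE2 a ha 1 mem1) hE2am hY2am.aestronglyMeasurable 1 hTane
    -- the unconditional mean of Y2p a 1 equals x a (sharp null)
    have e3 : ∫ ω, Y2p a 1 ω ∂μ = x a := (integral_congr_ae (hnull a ha)).symm
    rw [e2, e3]
    -- the remaining factors do not depend on a
    obtain rfl | rfl := ha
    · rw [← hm, ← hq]; ring
    · rw [hcondeq, hT1eq]
      have hble : (fun ω => 1 - E1p 1 ω) =ᵐ[μ[|{ω | E2p 0 0 ω = 1}]] (fun ω => 1 - E1p 0 ω) := by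
        have h := cond_absolutelyContinuous (μ := μ) (s := {ω | E2p 0 0 ω = 1})
        filter_upwards [h.ae_le hblind1] with ω hω
        rw [hω]
      rw [integral_congr_ae hble, ← hm, ← hq]; ring
  -- assemble
  have h10 := key1 0 mem0
  have h11 := key1 1 mem1
  have h20 := (key2 0 mem0).trans (key3 0 mem0)
  have h21 := (key2 1 mem1).trans (key3 1 mem1)
  rw [h10, h11, h20, h21]
  have hp1ne : p1 ≠ 0 := by
    intro h; rw [h10, h, zero_mul] at hd1; exact lt_irrefl 0 hd1
  have hmqne : m * q ≠ 0 := by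
    intro h; rw [h20, h, zero_mul] at hd2; exact lt_irrefl 0 hd2
  rw [mul_div_mul_left (x 1) (x 0) hp1ne, mul_div_mul_left (x 1) (x 0) hmqne]
end
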